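/- arXiv:1610.06712 — 3 statements merged into one kernel-verified Lean document; each statement's English description precedes it below -/
import Mathlib

section
/- Let g : ℝ → ℝ be nonnegative and integrable and let f_u : ℝ → ℝ be a nonnegative, nondecreasing measurable function such that f_u·g is integrable on every interval (-∞, t]. Define B(t) = ∫_{-∞}^{t} f_u(r) g(r) dr + ∫_{t}^{+∞} g(r) dr. Then (i) for every t ∈ ℝ, B(t) ≥ ∫_ℝ min{f_u(r), 1} g(r) dr, and (ii) the infimum of B(t) over t ∈ ℝ equals ∫_ℝ min{f_u(r), 1} g(r) dr. -/
open MeasureTheory Set Filter Topology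

theorem stmt_4 (g f_u : ℝ → ℝ)
    (hg_nonneg : ∀ r, 0 ≤ g r) (hg_int : Integrable g)
    (hf_nonneg : ∀ r, 0 ≤ f_u r) (hf_mono : Monotone f_u) (hf_meas : Measurable f_u)
    (hfg_int : ∀ t : ℝ, IntegrableOn (fun r => f_u r * g r) (Set.Iic t)) :
    (∀ t : ℝ,
      (∫ r, min (f_u r) 1 * g r) ≤
        (∫ r in Set.Iic t, f_u r * g r) + (∫ r in Set.Ioi t, g r)) ∧
    (⨅ t : ℝ, (∫ r in Set.Iic t, f_u r * g r) + (∫ r in Set.Ioi t, g r)) =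
      ∫ r, min (f_u r) 1 * g r := by
  have hm_meas : AEStronglyMeasurable (fun r => min (f_u r) 1 * g r) volume :=
    ((hf_meas.min measurable_const).aestronglyMeasurable).mul hg_int.aestronglyMeasurable
  have hm_int : Integrable (fun r => min (f_u r) 1 * g r) := by
    refine hg_int.mono hm_meas (Filter.Eventually.of_forall fun r => ?_)
    have h0 : 0 ≤ min (f_u r) 1 := le_min (hf_nonneg r) zero_le_one
    have h1 : min (f_u r) 1 ≤ 1 := min_le_right _ _
    rw [Real.norm_eq_abs, Real.norm_eq_abs, abs_of_nonneg (mul_nonneg h0 (hg_nonneg r))]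
    calc min (f_u r) 1 * g r ≤ 1 * g r := mul_le_mul_of_nonneg_right h1 (hg_nonneg r)
      _ = g r := one_mul _
      _ ≤ |g r| := le_abs_self _
  -- split of the min integral at any t
  have hsplit : ∀ t : ℝ, (∫ r, min (f_u r) 1 * g r) =
      (∫ r in Iic t, min (f_u r) 1 * g r) + (∫ r in Ioi t, min (f_u r) 1 * g r) := fun t =>
    (intervalIntegral.integral_Iic_add_Ioi hm_int.integrableOn hm_int.integrableOn).symm
  have hgsplit : ∀ t : ℝ, (∫ r, g r) =
      (∫ r in Iic t, g r) + (∫ r in Ioi t, g r) := fun t =>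
    (intervalIntegral.integral_Iic_add_Ioi hg_int.integrableOn hg_int.integrableOn).symm
  -- part (i)
  have hpart1 : ∀ t : ℝ, (∫ r, min (f_u r) 1 * g r) ≤
      (∫ r in Iic t, f_u r * g r) + (∫ r in Ioi t, g r) := by
    intro t
    rw [hsplit t]
    refine add_le_add ?_ ?_
    · refine setIntegral_mono_on hm_int.integrableOn (hfg_int t) measurableSet_Iic ?_
      exact fun x _ => mul_le_mul_of_nonneg_right (min_le_left _ _) (hg_nonneg x)
    · refine setIntegral_mono_on hm_int.integrableOn hg_int.integrableOn measurableSet_Ioi ?_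
      intro x _
      calc min (f_u x) 1 * g x ≤ 1 * g x :=
            mul_le_mul_of_nonneg_right (min_le_right _ _) (hg_nonneg x)
        _ = g x := one_mul _
  refine ⟨hpart1, ?_⟩
  have hbdd : BddBelow (Set.range fun t : ℝ =>
      (∫ r in Iic t, f_u r * g r) + (∫ r in Ioi t, g r)) := by
    refine ⟨∫ r, min (f_u r) 1 * g r, ?_⟩
    rintro x ⟨t, rfl⟩
    exact hpart1 t
  refine le_antisymm ?_ (le_ciInf hpart1)
  by_cases hS : {r : ℝ | 1 < f_u r}.Nonempty
  · by_cases hSb : BddBelow {r : ℝ | 1 < f_u r}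
    · -- take t0 = sInf S ; equality there
      set t0 := sInf {r : ℝ | 1 < f_u r} with ht0
      have hle : ∀ r < t0, f_u r ≤ 1 := by
        intro r hr
        by_contra h
        exact absurd (csInf_le hSb (not_le.mp h)) (not_le.mpr hr)
      have hgt : ∀ r, t0 < r → 1 < f_u r := by
        intro r hr
        obtain ⟨s, hs, hsr⟩ := exists_lt_of_csInf_lt hS hr
        exact lt_of_lt_of_le hs (hf_mono hsr.le)
      have heq : (∫ r, min (f_u r) 1 * g r) =
          (∫ r in Iic t0, f_u r * g r) + (∫ r in Ioi t0, g r) := by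
        rw [hsplit t0]
        congr 1
        · refine setIntegral_congr_ae measurableSet_Iic ?_
          have h0 : (volume : Measure ℝ) {t0} = 0 := Real.volume_singleton
          filter_upwards [measure_eq_zero_iff_ae_notMem.mp h0] with r hr hmem
          have hrlt : r < t0 := lt_of_le_of_ne hmem (by simpa using hr)
          rw [min_eq_left (hle r hrlt)]
        · refine setIntegral_congr_fun measurableSet_Ioi fun r hr => ?_
          rw [min_eq_right (hgt r hr).le, one_mul]
      rw [heq]
      exact ciInf_le hbdd t0
    · -- f_u > 1 everywhere; min = 1, M = ∫ g
      have hall : ∀ r, 1 < f_u r := by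
        intro r
        obtain ⟨s, hs, hsr⟩ := not_bddBelow_iff.mp hSb r
        exact lt_of_lt_of_le hs (hf_mono hsr.le)
      have hMg : (∫ r, min (f_u r) 1 * g r) = ∫ r, g r := by
        refine integral_congr_ae (Filter.Eventually.of_forall fun r => ?_)
        simp only [min_eq_right (hall r).le, one_mul]
      refine le_of_forall_pos_le_add fun ε hε => ?_
      -- ∫_{Iic t} f_u g → 0 as t → -∞
      have htend : Filter.Tendsto (fun n : ℕ => ∫ r in Iic (-(n:ℝ)), f_u r * g r)
          Filter.atTop (𝓝 (∫ r in (⋂ n : ℕ, Iic (-(n:ℝ))), f_u r * g r)) := by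
        refine Antitone.tendsto_setIntegral (fun n => measurableSet_Iic) ?_ ?_
        · intro a b hab
          exact Iic_subset_Iic.mpr (neg_le_neg (by exact_mod_cast hab))
        · simpa using hfg_int 0
      have hempty : (⋂ n : ℕ, Iic (-(n:ℝ))) = ∅ := by
        ext x
        simp only [mem_iInter, mem_Iic, mem_empty_iff_false, iff_false, not_forall, not_le]
        obtain ⟨n, hn⟩ := exists_nat_gt (-x)
        exact ⟨n, by linarith⟩
      rw [hempty] at htend
      simp only [Measure.restrict_empty, integral_zero_measure] at htend
      obtain ⟨n, hn⟩ := (htend.eventually (eventually_lt_nhds hε)).exists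
      refine le_trans (ciInf_le hbdd (-(n:ℝ))) ?_
      have hB : (∫ r in Iic (-(n:ℝ)), f_u r * g r) + (∫ r in Ioi (-(n:ℝ)), g r)
          ≤ (∫ r, g r) + ε := by
        have hginn : 0 ≤ ∫ r in Iic (-(n:ℝ)), g r :=
          setIntegral_nonneg measurableSet_Iic fun x _ => hg_nonneg x
        have := hgsplit (-(n:ℝ))
        linarith [hn.le]
      rw [hMg]
      exact hB
  · -- f_u ≤ 1 everywhere; min = f_u, M = ∫ f_u g
    have hall : ∀ r, f_u r ≤ 1 := by
      intro r
      by_contra h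
      exact hS ⟨r, not_le.mp h⟩
    have hMf : (∫ r, min (f_u r) 1 * g r) = ∫ r, f_u r * g r := by
      refine integral_congr_ae (Filter.Eventually.of_forall fun r => ?_)
      simp only [min_eq_left (hall r)]
    have hfg_int' : Integrable (fun r => f_u r * g r) := by
      have : (fun r => min (f_u r) 1 * g r) = fun r => f_u r * g r := by
        funext r; rw [min_eq_left (hall r)]
      rwa [this] at hm_int
    have hfsplit : ∀ t : ℝ, (∫ r, f_u r * g r) =
        (∫ r in Iic t, f_u r * g r) + (∫ r in Ioi t, f_u r * g r) := fun t =>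
      (intervalIntegral.integral_Iic_add_Ioi hfg_int'.integrableOn hfg_int'.integrableOn).symm
    refine le_of_forall_pos_le_add fun ε hε => ?_
    -- ∫_{Ioi t} g → 0 as t → ∞
    have htend : Filter.Tendsto (fun n : ℕ => ∫ r in Ioi (n:ℝ), g r)
        Filter.atTop (𝓝 (∫ r in (⋂ n : ℕ, Ioi (n:ℝ)), g r)) := by
      refine Antitone.tendsto_setIntegral (fun n => measurableSet_Ioi) ?_ ?_
      · intro a b hab
        exact Ioi_subset_Ioi (by exact_mod_cast hab)
      · exact hg_int.integrableOn
    have hempty : (⋂ n : ℕ, Ioi (n:ℝ)) = ∅ := by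
      ext x
      simp only [mem_iInter, mem_Ioi, mem_empty_iff_false, iff_false, not_forall, not_lt]
      obtain ⟨n, hn⟩ := exists_nat_gt x
      exact ⟨n, hn.le⟩
    rw [hempty] at htend
    simp only [Measure.restrict_empty, integral_zero_measure] at htend
    obtain ⟨n, hn⟩ := (htend.eventually (eventually_lt_nhds hε)).exists
    refine le_trans (ciInf_le hbdd (n:ℝ)) ?_
    have hfinn : 0 ≤ ∫ r in Ioi (n:ℝ), f_u r * g r :=
      setIntegral_nonneg measurableSet_Ioi fun x _ => mul_nonneg (hf_nonneg x) (hg_nonneg x)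
    have := hfsplit (n:ℝ)
    rw [hMf]
    linarith [hn.le]
end

section
/- Let n ≥ 2 be an integer, let d_min be a positive integer with d_min ≤ n, and let A_1, …, A_n be nonnegative integers with A_d = 0 for all d < d_min, A_{d_min} ≥ 1, and Σ_{d=1}^n A_d ≥ 3. For each d define p₂(r, d) = (Γ(n/2) / (√π · Γ((n−1)/2))) · ∫_0^{arccos(√d / r)} sin^{n−2}(φ) dφ for r > √d and p₂(r, d) = 0 for 0 ≤ r ≤ √d, and set F(r) = Σ_{d=1}^n A_d · p₂(r, d). Then there exists a unique r₁ ∈ (√(d_min), +∞) such that F(r₁) = 1. -/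
open Real

lemma aux_sinpow : ∀ m : ℕ, (∫ x in (0:ℝ)..(π/2), sin x ^ m)
    = Real.sqrt π * Real.Gamma (((m:ℝ)+1)/2) / (2 * Real.Gamma ((m:ℝ)/2+1)) := by
  intro m
  induction m using Nat.strong_induction_on with
  | _ m ih => ?_
  match m, ih with
  | 0, _ => 
    simp [Real.Gamma_one]
    rw [show (2:ℝ)⁻¹ = 1/2 by norm_num, Real.Gamma_one_half_eq,
      Real.mul_self_sqrt pi_pos.le]
  | 1, _ =>
    simp only [pow_one, integral_sin, Real.cos_zero, Real.cos_pi_div_two]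
    have h32 : Real.Gamma (((1:ℕ):ℝ)/2+1) = (1/2) * Real.sqrt π := by
      rw [show ((1:ℕ):ℝ)/2+1 = 1/2+1 by norm_num, Real.Gamma_add_one (by norm_num),
        Real.Gamma_one_half_eq]
    rw [h32, show (((1:ℕ):ℝ)+1)/2 = 1 by norm_num, Real.Gamma_one]
    have : Real.sqrt π ≠ 0 := by positivity
    field_simp
    norm_num
  | (m+2), ih =>
    rw [integral_sin_pow, ih m (by omega)]
    have hg1 : (0:ℝ) < Real.Gamma (((m:ℝ)+1)/2) :=
      Real.Gamma_pos_of_pos (by positivity)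
    have hg2 : (0:ℝ) < Real.Gamma ((m:ℝ)/2+1) :=
      Real.Gamma_pos_of_pos (by positivity)
    have h1 : Real.Gamma (((m:ℝ)+2)/2+1) = ((m:ℝ)/2+1) * Real.Gamma ((m:ℝ)/2+1) := by
      rw [show ((m:ℝ)+2)/2+1 = ((m:ℝ)/2+1)+1 by ring]
      exact Real.Gamma_add_one (by positivity)
    have h2 : Real.Gamma (((m:ℝ)+2+1)/2) = (((m:ℝ)+1)/2) * Real.Gamma (((m:ℝ)+1)/2) := by
      rw [show ((m:ℝ)+2+1)/2 = (((m:ℝ)+1)/2)+1 by ring]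
      exact Real.Gamma_add_one (by positivity)
    push_cast
    rw [h1, h2]
    simp only [Real.sin_zero, Real.cos_pi_div_two, mul_zero, zero_pow, Nat.succ_ne_zero,
      mul_one, zero_mul, sub_zero, zero_div, zero_add]
    have hm2 : (m:ℝ) + 2 ≠ 0 := by positivity
    field_simp
    ring

theorem stmt_16 (n : ℕ) (hn : 2 ≤ n) (dmin : ℕ) (hdmin : 1 ≤ dmin) (hdn : dmin ≤ n)
    (A : ℕ → ℕ) (hA_zero : ∀ d : ℕ, d < dmin → A d = 0) (hA_min : 1 ≤ A dmin)
    (hA_sum : 3 ≤ ∑ d ∈ Finset.Icc 1 n, A d)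
    (p₂ : ℝ → ℕ → ℝ)
    (hp_gt : ∀ (d : ℕ) (r : ℝ), Real.sqrt d < r →
      p₂ r d = (Real.Gamma ((n : ℝ) / 2) / (Real.sqrt π * Real.Gamma (((n : ℝ) - 1) / 2))) *
        ∫ φ in (0:ℝ)..(Real.arccos (Real.sqrt d / r)), (Real.sin φ) ^ (n - 2))
    (hp_le : ∀ (d : ℕ) (r : ℝ), 0 ≤ r → r ≤ Real.sqrt d → p₂ r d = 0)
    (F : ℝ → ℝ) (hF : ∀ r : ℝ, F r = ∑ d ∈ Finset.Icc 1 n, (A d : ℝ) * p₂ r d) :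
    ∃! r₁, r₁ ∈ Set.Ioi (Real.sqrt dmin) ∧ F r₁ = 1 := by
  have hn2 : (2:ℝ) ≤ (n:ℝ) := by exact_mod_cast hn
  set c : ℝ := Real.Gamma ((n : ℝ) / 2) / (Real.sqrt π * Real.Gamma (((n : ℝ) - 1) / 2)) with hc
  have hg1 : 0 < Real.Gamma ((n:ℝ)/2) := Real.Gamma_pos_of_pos (by linarith)
  have hg2 : 0 < Real.Gamma (((n:ℝ)-1)/2) := Real.Gamma_pos_of_pos (by linarith)
  have hsp : (0:ℝ) < Real.sqrt π := Real.sqrt_pos.mpr pi_pos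
  have hcpos : 0 < c := by rw [hc]; positivity
  have hkey : c * ∫ φ in (0:ℝ)..(π/2), sin φ ^ (n-2) = 1/2 := by
    rw [aux_sinpow (n-2)]
    have h1 : ((n-2 : ℕ):ℝ) = (n:ℝ) - 2 := by
      rw [Nat.cast_sub hn]; norm_num
    rw [h1, show ((n:ℝ)-2+1)/2 = ((n:ℝ)-1)/2 by ring,
      show ((n:ℝ)-2)/2+1 = (n:ℝ)/2 by ring, hc]
    field_simp
  set Prim : ℝ → ℝ := (fun x => ∫ t in (0:ℝ)..x, sin t ^ (n-2)) with hPrimdef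
  have hint : ∀ a b : ℝ, IntervalIntegrable (fun t => sin t ^ (n-2)) MeasureTheory.volume a b :=
    fun a b => (Continuous.intervalIntegrable (by fun_prop) a b)
  have hPrimCont : Continuous Prim := intervalIntegral.continuous_primitive hint 0
  set Φ : ℝ → ℝ := (fun x => c * Prim (Real.arccos x)) with hΦdef
  have hΦCont : Continuous Φ := continuous_const.mul (hPrimCont.comp Real.continuous_arccos)
  set q : ℕ → ℝ → ℝ := (fun d r => Φ (min (Real.sqrt d / r) 1)) with hqdef
  set G : ℝ → ℝ := (fun r => ∑ d ∈ Finset.Icc 1 n, (A d : ℝ) * q d r) with hGdef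
  have hdm1 : (1:ℝ) ≤ Real.sqrt dmin := Real.one_le_sqrt.mpr (by exact_mod_cast hdmin)
  have hpi2 : π/2 ≤ π := by linarith [pi_pos]
  -- Prim monotone facts
  have hPrim_le : ∀ θ θ' : ℝ, 0 ≤ θ → θ ≤ θ' → θ' ≤ π/2 → Prim θ ≤ Prim θ' := by
    intro θ θ' h0 h1 h2
    have hadd := intervalIntegral.integral_add_adjacent_intervals (hint 0 θ) (hint θ θ')
    have hnn : 0 ≤ ∫ t in θ..θ', sin t ^ (n-2) :=
      intervalIntegral.integral_nonneg h1 (fun u hu =>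
        pow_nonneg (Real.sin_nonneg_of_nonneg_of_le_pi (le_trans h0 hu.1)
          (le_trans hu.2 (by linarith))) _)
    simp only [hPrimdef]
    linarith [hadd]
  have hPrim_lt : ∀ θ θ' : ℝ, 0 ≤ θ → θ < θ' → θ' ≤ π/2 → Prim θ < Prim θ' := by
    intro θ θ' h0 h1 h2
    have hadd := intervalIntegral.integral_add_adjacent_intervals (hint 0 θ) (hint θ θ')
    have hpos : 0 < ∫ t in θ..θ', sin t ^ (n-2) :=
      intervalIntegral.intervalIntegral_pos_of_pos_on (hint θ θ')
        (fun x hx => pow_pos (Real.sin_pos_of_pos_of_lt_pi (lt_of_le_of_lt h0 hx.1)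
          (by linarith [hx.2])) _) h1
    simp only [hPrimdef]
    linarith [hadd]
  -- q monotonicity
  have hq_mono : ∀ (d : ℕ) (r r' : ℝ), 0 < r → r ≤ r' → q d r ≤ q d r' := by
    intro d r r' hr hrr
    have hr' : 0 < r' := lt_of_lt_of_le hr hrr
    have hxle : min (Real.sqrt d / r') 1 ≤ min (Real.sqrt d / r) 1 := by
      gcongr
    have hx'nn : 0 ≤ min (Real.sqrt d / r') 1 :=
      le_min (div_nonneg (Real.sqrt_nonneg _) hr'.le) zero_le_one
    have hxnn : 0 ≤ min (Real.sqrt d / r) 1 :=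
      le_min (div_nonneg (Real.sqrt_nonneg _) hr.le) zero_le_one
    have harc : Real.arccos (min (Real.sqrt d / r) 1) ≤ Real.arccos (min (Real.sqrt d / r') 1) := by
      rw [Real.arccos_eq_pi_div_two_sub_arcsin, Real.arccos_eq_pi_div_two_sub_arcsin]
      exact sub_le_sub_left (Real.monotone_arcsin hxle) _
    simp only [hqdef, hΦdef]
    apply mul_le_mul_of_nonneg_left _ hcpos.le
    exact hPrim_le _ _ (Real.arccos_nonneg _) harc (Real.arccos_le_pi_div_two.mpr hx'nn)
  have hq_strict : ∀ r r' : ℝ, Real.sqrt dmin ≤ r → r < r' → q dmin r < q dmin r' := by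
    intro r r' hr hrr
    have hr0 : 0 < r := lt_of_lt_of_le (by linarith) hr
    have hr'0 : 0 < r' := lt_trans hr0 hrr
    have hsd : 0 < Real.sqrt dmin := by linarith
    have hxr : min (Real.sqrt dmin / r) 1 = Real.sqrt dmin / r :=
      min_eq_left ((div_le_one hr0).mpr hr)
    have hxr' : min (Real.sqrt dmin / r') 1 = Real.sqrt dmin / r' :=
      min_eq_left ((div_le_one hr'0).mpr (by linarith))
    have hxlt : Real.sqrt dmin / r' < Real.sqrt dmin / r := by gcongr
    have hnn' : (0:ℝ) ≤ Real.sqrt dmin / r' := div_nonneg (Real.sqrt_nonneg _) hr'0.le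
    have hnn : (0:ℝ) ≤ Real.sqrt dmin / r := div_nonneg (Real.sqrt_nonneg _) hr0.le
    have hmem' : Real.sqrt dmin / r' ∈ Set.Icc (-1:ℝ) 1 :=
      ⟨by linarith, (div_le_one hr'0).mpr (by linarith)⟩
    have hmem : Real.sqrt dmin / r ∈ Set.Icc (-1:ℝ) 1 :=
      ⟨by linarith, (div_le_one hr0).mpr hr⟩
    have harc : Real.arccos (Real.sqrt dmin / r) < Real.arccos (Real.sqrt dmin / r') :=
      Real.strictAntiOn_arccos hmem' hmem hxlt
    simp only [hqdef, hΦdef, hxr, hxr']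
    apply mul_lt_mul_of_pos_left _ hcpos
    apply hPrim_lt _ _ (Real.arccos_nonneg _) harc
    exact Real.arccos_le_pi_div_two.mpr (by positivity)
  -- F = G on Ioi
  have hFG : ∀ r : ℝ, Real.sqrt dmin < r → F r = G r := by
    intro r hr
    have hr0 : 0 < r := lt_of_le_of_lt (by linarith) hr
    rw [hF, hGdef]
    apply Finset.sum_congr rfl
    intro d _
    by_cases hAd : A d = 0
    · simp [hAd]
    · congr 1
      by_cases hdr : Real.sqrt d < r
      · rw [hp_gt d r hdr]
        have hmin : min (Real.sqrt d / r) 1 = Real.sqrt d / r :=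
          min_eq_left ((div_le_one hr0).mpr hdr.le)
        simp only [hqdef, hΦdef, hPrimdef, hmin]
      · push_neg at hdr
        rw [hp_le d r hr0.le hdr]
        have hmin : min (Real.sqrt d / r) 1 = 1 := min_eq_right ((one_le_div hr0).mpr hdr)
        simp [hqdef, hΦdef, hPrimdef, hmin, Real.arccos_one]
  -- G at the left endpoint
  have hG0 : G (Real.sqrt dmin) = 0 := by
    rw [hGdef]
    apply Finset.sum_eq_zero
    intro d _
    by_cases hAd : A d = 0
    · simp [hAd]
    · have hdge : dmin ≤ d := by
        by_contra h; exact hAd (hA_zero d (not_le.mp h))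
      have hsle : Real.sqrt dmin ≤ Real.sqrt d := Real.sqrt_le_sqrt (Nat.cast_le.mpr hdge)
      have hmin : min (Real.sqrt d / Real.sqrt dmin) 1 = 1 :=
        min_eq_right ((one_le_div (by linarith)).mpr hsle)
      simp [hqdef, hΦdef, hPrimdef, hmin, Real.arccos_one]
  -- Φ 0 = 1/2
  have hΦ0 : Φ 0 = 1/2 := by
    simp only [hΦdef, hPrimdef, Real.arccos_zero]
    exact hkey
  -- limit of G at infinity
  have hS : (1:ℝ) < ∑ d ∈ Finset.Icc 1 n, (A d : ℝ) * (1/2) := by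
    have h3 : (3:ℝ) ≤ ∑ d ∈ Finset.Icc 1 n, (A d : ℝ) := by
      exact_mod_cast hA_sum
    rw [← Finset.sum_mul]
    linarith
  have hT : Filter.Tendsto G Filter.atTop (nhds (∑ d ∈ Finset.Icc 1 n, (A d : ℝ) * (1/2))) := by
    rw [hGdef]
    apply tendsto_finset_sum
    intro d _
    apply Filter.Tendsto.const_mul
    have h1 : Filter.Tendsto (fun r : ℝ => Real.sqrt d / r) Filter.atTop (nhds 0) :=
      Filter.Tendsto.const_div_atTop Filter.tendsto_id _
    have h2 : Filter.Tendsto (fun r : ℝ => min (Real.sqrt d / r) 1) Filter.atTop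
        (nhds (min 0 1)) := h1.min tendsto_const_nhds
    rw [min_eq_left zero_le_one] at h2
    have h3 := (hΦCont.tendsto 0).comp h2
    rw [hΦ0] at h3
    exact h3
  obtain ⟨b, hb⟩ := ((hT.eventually (eventually_gt_nhds hS)).and
    (Filter.eventually_gt_atTop (Real.sqrt dmin))).exists
  obtain ⟨hb1, hb2⟩ := hb
  -- continuity of G
  have hGcont : ContinuousOn G (Set.Ici (Real.sqrt dmin)) := by
    rw [hGdef]
    apply continuousOn_finset_sum
    intro d _
    have hdiv : ContinuousOn (fun r : ℝ => Real.sqrt d / r) (Set.Ici (Real.sqrt dmin)) := by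
      apply ContinuousOn.div continuousOn_const continuousOn_id
      intro x hx
      exact (lt_of_lt_of_le (by linarith : (0:ℝ) < Real.sqrt dmin) hx).ne'
    exact continuousOn_const.mul (hΦCont.comp_continuousOn ((continuous_id.min continuous_const).comp_continuousOn hdiv))
  -- IVT
  have hivt := intermediate_value_Ioo hb2.le (hGcont.mono (Set.Icc_subset_Ici_self))
  have h1mem : (1:ℝ) ∈ Set.Ioo (G (Real.sqrt dmin)) (G b) := by
    rw [hG0]; exact ⟨one_pos, hb1⟩
  obtain ⟨r₁, hr₁mem, hr₁⟩ := hivt h1mem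
  -- strict monotonicity
  have hsm : StrictMonoOn G (Set.Ici (Real.sqrt dmin)) := by
    intro r hr r' hr' hlt
    rw [hGdef]
    apply Finset.sum_lt_sum
    · intro d _
      exact mul_le_mul_of_nonneg_left
        (hq_mono d r r' (lt_of_lt_of_le (by linarith) hr) hlt.le) (Nat.cast_nonneg _)
    · refine ⟨dmin, Finset.mem_Icc.mpr ⟨hdmin, hdn⟩, ?_⟩
      have hA1 : (1:ℝ) ≤ (A dmin : ℝ) := by exact_mod_cast hA_min
      exact mul_lt_mul_of_pos_left (hq_strict r r' hr hlt) (by linarith)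
  refine ⟨r₁, ⟨hr₁mem.1, by rw [hFG r₁ hr₁mem.1, hr₁]⟩, ?_⟩
  rintro r' ⟨hr'mem, hFr'⟩
  apply hsm.injOn (Set.Ioi_subset_Ici_self hr'mem) (Set.Ioi_subset_Ici_self hr₁mem.1)
  rw [← hFG r' hr'mem, hFr', hr₁]
end

section
/- Let n ≥ 2 be an integer, let C ⊆ 𝔽₂ⁿ be a binary linear code containing a nonzero codeword, let d_min be the minimum Hamming weight of the nonzero codewords of C, and let A = #{c ∈ C : wt(c) = d_min}. For c ∈ C let s(c) ∈ ℝⁿ denote its BPSK image with coordinates s(c)_t = 1 − 2 c_t, and let s₀ = s(0) be the all-ones vector. For r > 0 let μ_r denote the uniform (normalized rotation-invariant) probability measure on the sphere {y ∈ ℝⁿ : ‖y − s₀‖ = r}, and define p₂(r, d) = (Γ(n/2) / (√π · Γ((n−1)/2))) · ∫_0^{arccos(√d / r)} sin^{n−2}(φ) dφ for r > √d and p₂(r, d) = 0 for r ≤ √d. Then there exists δ₁ > √(d_min) such that for all r ∈ (√(d_min), δ₁], μ_r({y : ∃ c ∈ C, c ≠ 0, ‖y − s(c)‖ ≤ ‖y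 − s₀‖}) = A · p₂(r, d_min). -/
open MeasureTheory Real Set Metric
open scoped RealInnerProductSpace ENNReal

noncomputable def bpsk {n : ℕ} (c : Fin n → ZMod 2) : EuclideanSpace ℝ (Fin n) :=
  (WithLp.equiv 2 (Fin n → ℝ)).symm (fun t => 1 - 2 * ((c t).val : ℝ))

namespace Stmt17

lemma zmod2_cases : ∀ x : ZMod 2, x = 0 ∨ x = 1 := by decide

lemma bpsk_sub_apply {N : ℕ} (c : Fin N → ZMod 2) (i : Fin N) :
    (bpsk c - bpsk (0 : Fin N → ZMod 2)) i = -2 * ((c i).val : ℝ) := by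
  have h1 : (bpsk c) i = 1 - 2 * ((c i).val : ℝ) := rfl
  have h2 : (bpsk (0 : Fin N → ZMod 2)) i = 1 - 2 * (((0 : ZMod 2)).val : ℝ) := rfl
  have : (bpsk c - bpsk (0 : Fin N → ZMod 2)) i = (bpsk c) i - (bpsk (0 : Fin N → ZMod 2)) i := rfl
  rw [this, h1, h2]
  norm_num

lemma inner_bpsk_sub {N : ℕ} (c c' : Fin N → ZMod 2) :
    ⟪bpsk c - bpsk (0 : Fin N → ZMod 2), bpsk c' - bpsk (0 : Fin N → ZMod 2)⟫
      = 4 * ((Finset.univ.filter fun i => c i ≠ 0 ∧ c' i ≠ 0).card : ℝ) := by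
  classical
  rw [PiLp.inner_apply]
  have h : ∀ i : Fin N, (inner ℝ ((bpsk c - bpsk (0 : Fin N → ZMod 2)) i)
        ((bpsk c' - bpsk (0 : Fin N → ZMod 2)) i) : ℝ)
      = 4 * (if c i ≠ 0 ∧ c' i ≠ 0 then (1:ℝ) else 0) := by
    intro i
    rw [RCLike.inner_apply, conj_trivial, bpsk_sub_apply, bpsk_sub_apply]
    rcases zmod2_cases (c i) with h1 | h1 <;> rcases zmod2_cases (c' i) with h2 | h2 <;>
      simp [h1, h2, show ((1 : ZMod 2)).val = 1 from rfl] <;> norm_num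
  rw [Finset.sum_congr rfl fun i _ => h i, ← Finset.mul_sum, Finset.sum_boole]

lemma hammingNorm_eq_card {N : ℕ} (c : Fin N → ZMod 2) :
    hammingNorm c = (Finset.univ.filter fun i => c i ≠ 0).card := rfl

lemma norm_bpsk_sub_sq {N : ℕ} (c : Fin N → ZMod 2) :
    ‖bpsk c - bpsk (0 : Fin N → ZMod 2)‖ ^ 2 = 4 * (hammingNorm c : ℝ) := by
  rw [← real_inner_self_eq_norm_sq, inner_bpsk_sub, hammingNorm_eq_card]
  have h : (Finset.univ.filter fun i => c i ≠ 0 ∧ c i ≠ 0)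
      = (Finset.univ.filter fun i => c i ≠ 0) := by
    ext i
    simp [Finset.mem_filter]
  rw [h]

lemma norm_bpsk_sub {N : ℕ} (c : Fin N → ZMod 2) :
    ‖bpsk c - bpsk (0 : Fin N → ZMod 2)‖ = 2 * Real.sqrt (hammingNorm c) := by
  have h := norm_bpsk_sub_sq c
  have h2 : ‖bpsk c - bpsk (0 : Fin N → ZMod 2)‖ = Real.sqrt (4 * (hammingNorm c : ℝ)) := by
    rw [← h, Real.sqrt_sq (norm_nonneg _)]
  rw [h2, show (4 : ℝ) * (hammingNorm c : ℝ) = 2^2 * (hammingNorm c : ℝ) by norm_num,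
    Real.sqrt_mul (by positivity), Real.sqrt_sq (by norm_num)]

lemma norm_le_iff_halfspace {N : ℕ} (c : Fin N → ZMod 2) (y : EuclideanSpace ℝ (Fin N)) :
    ‖y - bpsk c‖ ≤ ‖y - bpsk (0 : Fin N → ZMod 2)‖ ↔
      2 * (hammingNorm c : ℝ) ≤ ⟪y - bpsk (0 : Fin N → ZMod 2), bpsk c - bpsk (0 : Fin N → ZMod 2)⟫ := by
  set s₀ := bpsk (0 : Fin N → ZMod 2)
  set v := bpsk c - s₀ with hv
  have hy : y - bpsk c = (y - s₀) - v := by rw [hv]; abel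
  have hsq : ‖(y - s₀) - v‖ ^ 2 = ‖y - s₀‖ ^ 2 - 2 * ⟪y - s₀, v⟫ + ‖v‖ ^ 2 :=
    norm_sub_sq_real _ _
  have hv2 : ‖v‖ ^ 2 = 4 * (hammingNorm c : ℝ) := norm_bpsk_sub_sq c
  rw [hy]
  constructor
  · intro h
    have := mul_self_le_mul_self (norm_nonneg _) h
    nlinarith [this]
  · intro h
    have h2 : ‖(y - s₀) - v‖ ^ 2 ≤ ‖y - s₀‖ ^ 2 := by nlinarith
    nlinarith [norm_nonneg ((y - s₀) - v), norm_nonneg (y - s₀)]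

lemma inner_ge_of_caps {E : Type*} [NormedAddCommGroup E] [InnerProductSpace ℝ E]
    {ω u₁ u₂ : E} (hω : ‖ω‖ = 1) (h1 : ‖u₁‖ = 1) (h2 : ‖u₂‖ = 1) {t : ℝ} (ht : 0 ≤ t)
    (ha : t ≤ ⟪ω, u₁⟫) (hb : t ≤ ⟪ω, u₂⟫) : 2 * t ^ 2 - 1 ≤ ⟪u₁, u₂⟫ := by
  have hωω : ⟪ω, ω⟫ = 1 := by rw [real_inner_self_eq_norm_sq, hω]; norm_num
  have ha1 : ⟪ω, u₁⟫ ≤ 1 := by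
    have := real_inner_le_norm ω u₁
    rw [hω, h1] at this
    simpa using this
  have hb1 : ⟪ω, u₂⟫ ≤ 1 := by
    have := real_inner_le_norm ω u₂
    rw [hω, h2] at this
    simpa using this
  have hip : ⟪u₁ - ⟪ω, u₁⟫ • ω, u₂ - ⟪ω, u₂⟫ • ω⟫ = ⟪u₁, u₂⟫ - ⟪ω, u₁⟫ * ⟪ω, u₂⟫ := by
    rw [inner_sub_left, inner_sub_right, inner_sub_right, real_inner_smul_right,
      real_inner_smul_left, real_inner_smul_left, real_inner_smul_right, hωω,
      real_inner_comm u₁ ω]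
    ring
  have hp : ‖u₁ - ⟪ω, u₁⟫ • ω‖ ^ 2 = 1 - ⟪ω, u₁⟫ ^ 2 := by
    rw [norm_sub_sq_real, real_inner_smul_right, norm_smul, h1, real_inner_comm u₁ ω, hω,
      Real.norm_eq_abs, mul_pow, sq_abs]
    ring
  have hq : ‖u₂ - ⟪ω, u₂⟫ • ω‖ ^ 2 = 1 - ⟪ω, u₂⟫ ^ 2 := by
    rw [norm_sub_sq_real, real_inner_smul_right, norm_smul, h2, real_inner_comm u₂ ω, hω,
      Real.norm_eq_abs, mul_pow, sq_abs]
    ring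
  have hCS : |⟪u₁ - ⟪ω, u₁⟫ • ω, u₂ - ⟪ω, u₂⟫ • ω⟫| ≤
      ‖u₁ - ⟪ω, u₁⟫ • ω‖ * ‖u₂ - ⟪ω, u₂⟫ • ω‖ := abs_real_inner_le_norm _ _
  have ht1 : t ^ 2 ≤ 1 := by nlinarith
  have hpn : ‖u₁ - ⟪ω, u₁⟫ • ω‖ ^ 2 ≤ 1 - t ^ 2 := by nlinarith
  have hqn : ‖u₂ - ⟪ω, u₂⟫ • ω‖ ^ 2 ≤ 1 - t ^ 2 := by nlinarith
  have hpq : ‖u₁ - ⟪ω, u₁⟫ • ω‖ * ‖u₂ - ⟪ω, u₂⟫ • ω‖ ≤ 1 - t ^ 2 := by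
    nlinarith [norm_nonneg (u₁ - ⟪ω, u₁⟫ • ω), norm_nonneg (u₂ - ⟪ω, u₂⟫ • ω),
      sq_nonneg (‖u₁ - ⟪ω, u₁⟫ • ω‖ - ‖u₂ - ⟪ω, u₂⟫ • ω‖)]
  have habs := (abs_le.mp hCS).1
  rw [hip] at habs
  nlinarith


lemma exists_iso_map_eq {N : ℕ} (hN : 0 < N) (u u' : EuclideanSpace ℝ (Fin N))
    (hu : ‖u‖ = 1) (hu' : ‖u'‖ = 1) :
    ∃ O : EuclideanSpace ℝ (Fin N) ≃ₗᵢ[ℝ] EuclideanSpace ℝ (Fin N), O u = u' := by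
  classical
  have card : Module.finrank ℝ (EuclideanSpace ℝ (Fin N)) = Fintype.card (Fin N) := by
    simp [finrank_euclideanSpace_fin]
  set i₀ : Fin N := ⟨0, hN⟩
  have horth : ∀ v : EuclideanSpace ℝ (Fin N), ‖v‖ = 1 →
      Orthonormal ℝ (({i₀} : Set (Fin N)).restrict (fun _ : Fin N => v)) := by
    intro v hv
    constructor
    · intro i
      exact hv
    · intro i j hij
      exact absurd (Subtype.ext (i.2.trans j.2.symm)) hij
  obtain ⟨b, hb⟩ := (horth u hu).exists_orthonormalBasis_extension_of_card_eq card
  obtain ⟨b', hb'⟩ := (horth u' hu').exists_orthonormalBasis_extension_of_card_eq card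
  refine ⟨b.repr.trans b'.repr.symm, ?_⟩
  have h1 : b i₀ = u := hb i₀ rfl
  have h2 : b' i₀ = u' := hb' i₀ rfl
  simp only [LinearIsometryEquiv.trans_apply]
  rw [← h1, b.repr_self, b'.repr_symm_single, h2]

lemma measurable_T {N : ℕ} (s₀ : EuclideanSpace ℝ (Fin N))
    (O : EuclideanSpace ℝ (Fin N) ≃ₗᵢ[ℝ] EuclideanSpace ℝ (Fin N)) :
    Measurable (fun y => s₀ + O (y - s₀)) := by
  exact (measurable_const.add (O.continuous.measurable.comp (measurable_id.sub measurable_const)))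

lemma measurableSet_cap {N : ℕ} (s₀ u : EuclideanSpace ℝ (Fin N)) (a : ℝ) :
    MeasurableSet {y : EuclideanSpace ℝ (Fin N) | a ≤ ⟪y - s₀, u⟫} := by
  apply measurableSet_le measurable_const
  exact ((continuous_id.sub continuous_const).inner continuous_const).measurable

lemma cap_const {N : ℕ} (hN : 0 < N) (s₀ : EuclideanSpace ℝ (Fin N))
    (ν : Measure (EuclideanSpace ℝ (Fin N)))
    (hν : ∀ O : EuclideanSpace ℝ (Fin N) ≃ₗᵢ[ℝ] EuclideanSpace ℝ (Fin N),
      ν.map (fun y => s₀ + O (y - s₀)) = ν)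
    (a : ℝ) (u u' : EuclideanSpace ℝ (Fin N)) (hu : ‖u‖ = 1) (hu' : ‖u'‖ = 1) :
    ν {y | a ≤ ⟪y - s₀, u⟫} = ν {y | a ≤ ⟪y - s₀, u'⟫} := by
  obtain ⟨O, hO⟩ := exists_iso_map_eq hN u u' hu hu'
  have key : ν {y | a ≤ ⟪y - s₀, u'⟫} =
      ν ((fun y => s₀ + O (y - s₀)) ⁻¹' {y | a ≤ ⟪y - s₀, u'⟫}) := by
    conv_lhs => rw [← hν O]
    rw [Measure.map_apply (measurable_T s₀ O) (measurableSet_cap s₀ u' a)]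
  rw [key]
  congr 1
  ext y
  simp only [Set.mem_preimage, Set.mem_setOf_eq, add_sub_cancel_left]
  rw [← hO, LinearIsometryEquiv.inner_map_map]

lemma cap_eq_of_inv {N : ℕ} (hN : 0 < N) (s₀ : EuclideanSpace ℝ (Fin N)) {r : ℝ} (hr : 0 < r)
    (ν₁ ν₂ : Measure (EuclideanSpace ℝ (Fin N)))
    [IsProbabilityMeasure ν₁] [IsProbabilityMeasure ν₂]
    (hs1 : ν₁ (sphere s₀ r) = 1) (hs2 : ν₂ (sphere s₀ r) = 1)
    (hν₁ : ∀ O : EuclideanSpace ℝ (Fin N) ≃ₗᵢ[ℝ] EuclideanSpace ℝ (Fin N),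
      ν₁.map (fun y => s₀ + O (y - s₀)) = ν₁)
    (hν₂ : ∀ O : EuclideanSpace ℝ (Fin N) ≃ₗᵢ[ℝ] EuclideanSpace ℝ (Fin N),
      ν₂.map (fun y => s₀ + O (y - s₀)) = ν₂)
    (a : ℝ) (u : EuclideanSpace ℝ (Fin N)) (hu : ‖u‖ = 1) :
    ν₁ {y | a ≤ ⟪y - s₀, u⟫} = ν₂ {y | a ≤ ⟪y - s₀, u⟫} := by
  set K : Set (EuclideanSpace ℝ (Fin N) × EuclideanSpace ℝ (Fin N)) :=
    {p | r * a ≤ ⟪p.1 - s₀, p.2 - s₀⟫} with hK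
  have hKmeas : MeasurableSet K := by
    apply measurableSet_le measurable_const
    exact ((continuous_fst.sub continuous_const).inner
      (continuous_snd.sub continuous_const)).measurable
  have hnull1 : ν₁ (sphere s₀ r)ᶜ = 0 := by
    rw [measure_compl (isClosed_sphere.measurableSet) (measure_ne_top _ _), hs1, measure_univ, tsub_self]
  have hnull2 : ν₂ (sphere s₀ r)ᶜ = 0 := by
    rw [measure_compl (isClosed_sphere.measurableSet) (measure_ne_top _ _), hs2, measure_univ, tsub_self]
  have hae1 : ∀ᵐ y ∂ν₁, y ∈ sphere s₀ r := by
    rw [MeasureTheory.ae_iff]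
    exact hnull1
  have hae2 : ∀ᵐ z ∂ν₂, z ∈ sphere s₀ r := by
    rw [MeasureTheory.ae_iff]
    exact hnull2
  have hunit : ∀ y ∈ sphere s₀ r, ‖r⁻¹ • (y - s₀)‖ = 1 := by
    intro y hy
    rw [mem_sphere_iff_norm] at hy
    rw [norm_smul, hy, Real.norm_eq_abs, abs_of_pos (inv_pos.mpr hr), inv_mul_cancel₀ hr.ne']
  -- the two iterated integrals
  have key : ∫⁻ y, ∫⁻ z, K.indicator (fun _ => (1 : ℝ≥0∞)) (y, z) ∂ν₂ ∂ν₁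
      = ∫⁻ z, ∫⁻ y, K.indicator (fun _ => (1 : ℝ≥0∞)) (y, z) ∂ν₁ ∂ν₂ := by
    apply lintegral_lintegral_swap
    exact ((measurable_indicator_const_iff 1).mpr hKmeas).aemeasurable
  have inner1 : ∀ y, ∫⁻ z, K.indicator (fun _ => (1 : ℝ≥0∞)) (y, z) ∂ν₂ = ν₂ {z | (y, z) ∈ K} := by
    intro y
    have h : ∀ z, K.indicator (fun _ => (1 : ℝ≥0∞)) (y, z)
        = ({z | (y, z) ∈ K}).indicator (fun _ => (1 : ℝ≥0∞)) z := by
      intro z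
      simp [Set.indicator_apply]
    rw [lintegral_congr h, lintegral_indicator (show MeasurableSet {z | (y, z) ∈ K} from measurable_prodMk_left hKmeas),
      setLIntegral_one]
  have inner2 : ∀ z, ∫⁻ y, K.indicator (fun _ => (1 : ℝ≥0∞)) (y, z) ∂ν₁ = ν₁ {y | (y, z) ∈ K} := by
    intro z
    have h : ∀ y, K.indicator (fun _ => (1 : ℝ≥0∞)) (y, z)
        = ({y | (y, z) ∈ K}).indicator (fun _ => (1 : ℝ≥0∞)) y := by
      intro y
      simp [Set.indicator_apply]
    rw [lintegral_congr h, lintegral_indicator (show MeasurableSet {y | (y, z) ∈ K} from measurable_prodMk_right hKmeas),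
      setLIntegral_one]
  have slice1 : ∀ y ∈ sphere s₀ r, ν₂ {z | (y, z) ∈ K} = ν₂ {z | a ≤ ⟪z - s₀, u⟫} := by
    intro y hy
    have hset : {z | (y, z) ∈ K} = {z | a ≤ ⟪z - s₀, r⁻¹ • (y - s₀)⟫} := by
      ext z
      simp only [hK, Set.mem_setOf_eq, real_inner_smul_right]
      rw [real_inner_comm]
      constructor
      · intro h
        rw [inv_mul_eq_div, le_div_iff₀ hr]
        linarith [h]
      · intro h
        rw [inv_mul_eq_div, le_div_iff₀ hr] at h
        linarith [h]
    rw [hset]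
    exact cap_const hN s₀ ν₂ hν₂ a _ u (hunit y hy) hu
  have slice2 : ∀ z ∈ sphere s₀ r, ν₁ {y | (y, z) ∈ K} = ν₁ {y | a ≤ ⟪y - s₀, u⟫} := by
    intro z hz
    have hset : {y | (y, z) ∈ K} = {y | a ≤ ⟪y - s₀, r⁻¹ • (z - s₀)⟫} := by
      ext y
      simp only [hK, Set.mem_setOf_eq, real_inner_smul_right]
      constructor
      · intro h
        rw [inv_mul_eq_div, le_div_iff₀ hr]
        linarith [h]
      · intro h
        rw [inv_mul_eq_div, le_div_iff₀ hr] at h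
        linarith [h]
    rw [hset]
    exact cap_const hN s₀ ν₁ hν₁ a _ u (hunit z hz) hu
  have lhs_eq : ∫⁻ y, ∫⁻ z, K.indicator (fun _ => (1 : ℝ≥0∞)) (y, z) ∂ν₂ ∂ν₁ = ν₂ {z | a ≤ ⟪z - s₀, u⟫} := by
    rw [lintegral_congr_ae (hae1.mono fun y hy => by rw [inner1 y, slice1 y hy])]
    simp [lintegral_const]
  have rhs_eq : ∫⁻ z, ∫⁻ y, K.indicator (fun _ => (1 : ℝ≥0∞)) (y, z) ∂ν₁ ∂ν₂ = ν₁ {y | a ≤ ⟪y - s₀, u⟫} := by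
    rw [lintegral_congr_ae (hae2.mono fun z hz => by rw [inner2 z, slice2 z hz])]
    simp [lintegral_const]
  rw [← rhs_eq, ← key, lhs_eq]


noncomputable def projS {N : ℕ} (s₀ : EuclideanSpace ℝ (Fin N)) (r : ℝ)
    (x : EuclideanSpace ℝ (Fin N)) : EuclideanSpace ℝ (Fin N) :=
  s₀ + (r * ‖x‖⁻¹) • x

lemma measurable_projS {N : ℕ} (s₀ : EuclideanSpace ℝ (Fin N)) (r : ℝ) :
    Measurable (projS s₀ r) := by
  apply measurable_const.add
  exact ((measurable_const.mul measurable_norm.inv).smul measurable_id)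

noncomputable def sigmaMeasure {N : ℕ} (s₀ : EuclideanSpace ℝ (Fin N)) (r : ℝ) :
    Measure (EuclideanSpace ℝ (Fin N)) :=
  (volume (ball (0 : EuclideanSpace ℝ (Fin N)) 1))⁻¹ •
    (volume.restrict (ball 0 1)).map (projS s₀ r)

lemma sigma_apply {N : ℕ} (s₀ : EuclideanSpace ℝ (Fin N)) (r : ℝ)
    {A : Set (EuclideanSpace ℝ (Fin N))} (hA : MeasurableSet A) :
    sigmaMeasure s₀ r A
      = (volume (ball (0 : EuclideanSpace ℝ (Fin N)) 1))⁻¹ *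
        volume ((projS s₀ r) ⁻¹' A ∩ ball 0 1) := by
  rw [sigmaMeasure, Measure.smul_apply, Measure.map_apply (measurable_projS s₀ r) hA,
    Measure.restrict_apply' measurableSet_ball, smul_eq_mul]

section SigmaProps

variable {m : ℕ}

lemma ball_vol_ne_zero : volume (ball (0 : EuclideanSpace ℝ (Fin (m + 2))) 1) ≠ 0 :=
  (measure_ball_pos _ _ one_pos).ne'

lemma ball_vol_ne_top : volume (ball (0 : EuclideanSpace ℝ (Fin (m + 2))) 1) ≠ ⊤ :=
  measure_ball_lt_top.ne

lemma sigma_univ (s₀ : EuclideanSpace ℝ (Fin (m + 2))) (r : ℝ) :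
    sigmaMeasure s₀ r Set.univ = 1 := by
  rw [sigma_apply s₀ r MeasurableSet.univ, Set.preimage_univ, Set.univ_inter,
    ENNReal.inv_mul_cancel ball_vol_ne_zero ball_vol_ne_top]

instance sigma_prob (s₀ : EuclideanSpace ℝ (Fin (m + 2))) (r : ℝ) :
    IsProbabilityMeasure (sigmaMeasure s₀ r) := ⟨sigma_univ s₀ r⟩

lemma sigma_sphere (s₀ : EuclideanSpace ℝ (Fin (m + 2))) {r : ℝ} (hr : 0 < r) :
    sigmaMeasure s₀ r (sphere s₀ r) = 1 := by
  rw [sigma_apply s₀ r isClosed_sphere.measurableSet]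
  have hpre : (projS s₀ r) ⁻¹' (sphere s₀ r) ∩ ball 0 1
      = ball (0 : EuclideanSpace ℝ (Fin (m + 2))) 1 \ {0} := by
    ext x
    simp only [Set.mem_inter_iff, Set.mem_preimage, mem_sphere_iff_norm, projS,
      add_sub_cancel_left, Set.mem_diff, Set.mem_singleton_iff]
    rw [norm_smul, Real.norm_eq_abs]
    constructor
    · rintro ⟨h1, h2⟩
      refine ⟨h2, ?_⟩
      rintro rfl
      simp at h1
      exact hr.ne' h1.symm
    · rintro ⟨h1, h2⟩
      refine ⟨?_, h1⟩
      have hx : ‖x‖ ≠ 0 := fun h => h2 (norm_eq_zero.mp h)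
      rw [abs_of_nonneg (by positivity), mul_assoc, inv_mul_cancel₀ hx, mul_one]
  rw [hpre, measure_diff_null (measure_singleton _),
    ENNReal.inv_mul_cancel ball_vol_ne_zero ball_vol_ne_top]

lemma sigma_inv (s₀ : EuclideanSpace ℝ (Fin (m + 2))) (r : ℝ)
    (O : EuclideanSpace ℝ (Fin (m + 2)) ≃ₗᵢ[ℝ] EuclideanSpace ℝ (Fin (m + 2))) :
    (sigmaMeasure s₀ r).map (fun y => s₀ + O (y - s₀)) = sigmaMeasure s₀ r := by
  have hOm : Measurable ⇑O := O.continuous.measurable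
  have hpre : (⇑O) ⁻¹' (ball (0 : EuclideanSpace ℝ (Fin (m + 2))) 1) = ball 0 1 := by
    ext x
    simp [mem_ball_zero_iff, O.norm_map]
  have hmapO : Measure.map (⇑O) (volume.restrict (ball (0 : EuclideanSpace ℝ (Fin (m + 2))) 1))
      = volume.restrict (ball 0 1) := by
    conv_rhs => rw [← O.measurePreserving.map_eq,
      Measure.restrict_map hOm measurableSet_ball, hpre]
  rw [sigmaMeasure, Measure.map_smul]
  congr 1
  rw [Measure.map_map (measurable_T s₀ O) (measurable_projS s₀ r)]
  have hcomp : (fun y => s₀ + O (y - s₀)) ∘ (projS s₀ r) = (projS s₀ r) ∘ ⇑O := by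
    funext x
    simp only [Function.comp_apply, projS, add_sub_cancel_left]
    rw [O.map_smul, O.norm_map]
  rw [hcomp, ← Measure.map_map (measurable_projS s₀ r) hOm, hmapO]

lemma sigma_cap (s₀ : EuclideanSpace ℝ (Fin (m + 2))) {r a : ℝ} (hr : 0 < r) (ha : 0 < a)
    (u : EuclideanSpace ℝ (Fin (m + 2))) :
    sigmaMeasure s₀ r {y | a ≤ ⟪y - s₀, u⟫}
      = (volume (ball (0 : EuclideanSpace ℝ (Fin (m + 2))) 1))⁻¹ *
        volume {x : EuclideanSpace ℝ (Fin (m + 2)) | (a / r) * ‖x‖ ≤ ⟪x, u⟫ ∧ ‖x‖ < 1} := by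
  rw [sigma_apply s₀ r (measurableSet_cap s₀ u a)]
  congr 1
  have hset : (projS s₀ r) ⁻¹' {y | a ≤ ⟪y - s₀, u⟫} ∩ ball 0 1
      = {x : EuclideanSpace ℝ (Fin (m + 2)) | (a / r) * ‖x‖ ≤ ⟪x, u⟫ ∧ ‖x‖ < 1} \ {0} := by
    ext x
    simp only [Set.mem_inter_iff, Set.mem_preimage, Set.mem_setOf_eq, projS,
      add_sub_cancel_left, mem_ball_zero_iff, Set.mem_diff, Set.mem_singleton_iff,
      real_inner_smul_left]
    by_cases hx : x = 0
    · subst hx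
      simp [ha.not_ge, hr.ne']
    · have hxn : (0 : ℝ) < ‖x‖ := norm_pos_iff.mpr hx
      constructor
      · rintro ⟨h1, h2⟩
        refine ⟨⟨?_, h2⟩, hx⟩
        rw [div_mul_eq_mul_div, div_le_iff₀ hr]
        calc a * ‖x‖ ≤ r * ‖x‖⁻¹ * ⟪x, u⟫ * ‖x‖ := by
              exact mul_le_mul_of_nonneg_right h1 hxn.le
          _ = ⟪x, u⟫ * r := by
              field_simp
      · rintro ⟨⟨h1, h2⟩, _⟩
        refine ⟨?_, h2⟩
        rw [div_mul_eq_mul_div, div_le_iff₀ hr] at h1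
        rw [show r * ‖x‖⁻¹ * ⟪x, u⟫ = (⟪x, u⟫ * r) / ‖x‖ by field_simp,
          le_div_iff₀ hxn]
        linarith
  rw [hset, measure_diff_null (measure_singleton _)]

end SigmaProps


section VolumeCap

variable {m : ℕ}

noncomputable def chart (m : ℕ) :
    (ℝ × EuclideanSpace ℝ (Fin (m + 1))) ≃ᵐ EuclideanSpace ℝ (Fin (m + 2)) :=
  ((MeasurableEquiv.prodCongr (MeasurableEquiv.refl ℝ)
        ((MeasurableEquiv.toLp 2 (Fin (m + 1) → ℝ)).symm)).trans
      ((MeasurableEquiv.piFinSuccAbove (fun _ : Fin (m + 2) => ℝ) 0).symm)).trans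
    ((MeasurableEquiv.toLp 2 (Fin (m + 2) → ℝ)).symm).symm

lemma chart_mp (m : ℕ) : MeasurePreserving (chart m) volume volume := by
  have h1 : MeasurePreserving
      (⇑(MeasurableEquiv.prodCongr (MeasurableEquiv.refl ℝ)
        ((MeasurableEquiv.toLp 2 (Fin (m + 1) → ℝ)).symm)))
      (volume : Measure (ℝ × EuclideanSpace ℝ (Fin (m + 1))))
      (volume : Measure (ℝ × (Fin (m + 1) → ℝ))) := by
    rw [Measure.volume_eq_prod, Measure.volume_eq_prod]
    exact (MeasurePreserving.id volume).prod
      (EuclideanSpace.volume_preserving_symm_measurableEquiv_toLp (Fin (m + 1)))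
  have h2 : MeasurePreserving
      (⇑((MeasurableEquiv.piFinSuccAbove (fun _ : Fin (m + 2) => ℝ) 0).symm))
      (volume : Measure (ℝ × (Fin (m + 1) → ℝ)))
      (volume : Measure (Fin (m + 2) → ℝ)) := by
    have h := (measurePreserving_piFinSuccAbove (fun _ : Fin (m + 2) => (volume : Measure ℝ)) 0).symm
    have e1 : (volume : Measure (Fin (m + 2) → ℝ)) = Measure.pi fun _ => volume := volume_pi
    have e2 : (volume : Measure (ℝ × (Fin (m + 1) → ℝ)))
        = (volume : Measure ℝ).prod (Measure.pi fun _ : Fin (m + 1) => volume) := by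
      rw [Measure.volume_eq_prod, volume_pi]
    rw [e1, e2]
    exact h
  have h3 : MeasurePreserving (⇑(((MeasurableEquiv.toLp 2 (Fin (m + 2) → ℝ)).symm).symm))
      (volume : Measure (Fin (m + 2) → ℝ))
      (volume : Measure (EuclideanSpace ℝ (Fin (m + 2)))) :=
    (EuclideanSpace.volume_preserving_symm_measurableEquiv_toLp (Fin (m + 2))).symm
  exact (h3.comp (h2.comp h1) : _)

lemma chart_apply_coord (a : ℝ) (w : EuclideanSpace ℝ (Fin (m + 1))) (i : Fin (m + 2)) :
    (chart m (a, w)) i = Fin.insertNth (α := fun _ : Fin (m + 2) => ℝ) 0 a (fun j => w j) i := rfl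

lemma chart_apply_zero (a : ℝ) (w : EuclideanSpace ℝ (Fin (m + 1))) :
    (chart m (a, w)) 0 = a := by
  rw [chart_apply_coord, Fin.insertNth_apply_same]

lemma norm_chart (a : ℝ) (w : EuclideanSpace ℝ (Fin (m + 1))) :
    ‖chart m (a, w)‖ = Real.sqrt (a ^ 2 + ‖w‖ ^ 2) := by
  rw [EuclideanSpace.norm_eq]
  congr 1
  rw [Fin.sum_univ_succAbove (fun i => ‖(chart m (a, w)) i‖ ^ 2) 0]
  have h0 : ‖(chart m (a, w)) 0‖ ^ 2 = a ^ 2 := by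
    rw [chart_apply_zero, Real.norm_eq_abs, sq_abs]
  have hrest : ∀ j : Fin (m + 1), ‖(chart m (a, w)) ((0 : Fin (m + 2)).succAbove j)‖ ^ 2
      = ‖w j‖ ^ 2 := by
    intro j
    rw [chart_apply_coord, Fin.insertNth_apply_succAbove]
  rw [h0, Finset.sum_congr rfl fun j _ => hrest j]
  congr 1
  have := EuclideanSpace.norm_eq w
  rw [this, Real.sq_sqrt (by positivity)]

set_option maxHeartbeats 1000000 in
lemma volume_cap (m : ℕ) {t : ℝ} (ht : 0 < t) (ht1 : t < 1) :
    volume {x : EuclideanSpace ℝ (Fin (m + 2)) |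
        t * ‖x‖ ≤ ⟪x, EuclideanSpace.single 0 (1 : ℝ)⟫ ∧ ‖x‖ < 1}
      = ENNReal.ofReal ((((m : ℝ) + 1) *
          (volume (ball (0 : EuclideanSpace ℝ (Fin (m + 1))) 1)).toReal / ((m : ℝ) + 2)) *
          ∫ φ in (0:ℝ)..(Real.arccos t), Real.sin φ ^ m) := by
  classical
  set θ := Real.arccos t with hθdef
  have hθ0 : 0 ≤ θ := Real.arccos_nonneg t
  have hθlt : θ < π / 2 := Real.arccos_lt_pi_div_two.mpr ht
  have hπ : (0:ℝ) < π := Real.pi_pos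
  set Scap : Set (EuclideanSpace ℝ (Fin (m + 2))) :=
    {x | t * ‖x‖ ≤ ⟪x, EuclideanSpace.single 0 (1 : ℝ)⟫ ∧ ‖x‖ < 1} with hScap
  have hScapm : MeasurableSet Scap := by
    rw [hScap, Set.setOf_and]
    exact (measurableSet_le (continuous_const.mul continuous_norm).measurable
      (continuous_id.inner continuous_const).measurable).inter
      (measurableSet_lt continuous_norm.measurable measurable_const)
  set S' : Set (ℝ × EuclideanSpace ℝ (Fin (m + 1))) :=
    {p | t * Real.sqrt (p.1 ^ 2 + ‖p.2‖ ^ 2) ≤ p.1 ∧ Real.sqrt (p.1 ^ 2 + ‖p.2‖ ^ 2) < 1}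
    with hS'
  have hcont : Continuous (fun p : ℝ × EuclideanSpace ℝ (Fin (m + 1)) =>
      Real.sqrt (p.1 ^ 2 + ‖p.2‖ ^ 2)) :=
    ((continuous_fst.pow 2).add (continuous_snd.norm.pow 2)).sqrt
  have hS'm : MeasurableSet S' := by
    rw [hS', Set.setOf_and]
    exact (measurableSet_le (continuous_const.mul hcont).measurable
      continuous_fst.measurable).inter
      (measurableSet_lt hcont.measurable measurable_const)
  have hpre : (chart m) ⁻¹' Scap = S' := by
    ext ⟨a, w⟩
    simp only [Set.mem_preimage, hScap, hS', Set.mem_setOf_eq, norm_chart,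
      EuclideanSpace.inner_single_right, conj_trivial, one_mul, chart_apply_zero]
  have hveq : volume Scap = volume S' := by
    rw [← hpre]
    exact ((chart_mp m).measure_preimage hScapm.nullMeasurableSet).symm
  have hsub : Scap ⊆ ball (0 : EuclideanSpace ℝ (Fin (m + 2))) 1 := fun x hx =>
    mem_ball_zero_iff.mpr hx.2
  have hfin : volume Scap ≠ ⊤ := ((measure_mono hsub).trans_lt measure_ball_lt_top).ne
  have hfin' : volume S' ≠ ⊤ := hveq ▸ hfin
  set B : ℝ := (volume (ball (0 : EuclideanSpace ℝ (Fin (m + 1))) 1)).toReal with hB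
  set I : ℝ := ∫ φ in (0:ℝ)..θ, Real.sin φ ^ m with hI
  set g : ℝ → ℝ → ℝ := fun a ρ =>
    Set.indicator {ρ' : ℝ | t * Real.sqrt (a ^ 2 + ρ' ^ 2) ≤ a ∧ Real.sqrt (a ^ 2 + ρ' ^ 2) < 1}
      (fun _ => (1:ℝ)) ρ with hg
  have hind : ∀ p : ℝ × EuclideanSpace ℝ (Fin (m + 1)),
      S'.indicator (fun _ => (1:ℝ)) p = g p.1 ‖p.2‖ := by
    intro p
    rw [hg]
    simp only [Set.indicator_apply, hS', Set.mem_setOf_eq]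
  have step1 : (volume S').toReal = ∫ p : ℝ × EuclideanSpace ℝ (Fin (m + 1)),
      S'.indicator (fun _ => (1:ℝ)) p := (integral_indicator_one hS'm).symm
  have hS'int : Integrable (S'.indicator fun _ => (1:ℝ)) := by
    rw [integrable_indicator_iff hS'm]
    exact integrableOn_const hfin'
  have step2 : ∫ p : ℝ × EuclideanSpace ℝ (Fin (m + 1)), S'.indicator (fun _ => (1:ℝ)) p
      = ∫ a : ℝ, ∫ w : EuclideanSpace ℝ (Fin (m + 1)),
          S'.indicator (fun _ => (1:ℝ)) (a, w) := by
    rw [Measure.volume_eq_prod]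
    exact integral_prod _ (by rw [← Measure.volume_eq_prod]; exact hS'int)
  have hGa : ∀ a : ℝ, (∫ w : EuclideanSpace ℝ (Fin (m + 1)),
        S'.indicator (fun _ => (1:ℝ)) (a, w))
      = ((m : ℝ) + 1) * (B * ∫ ρ in Ioi (0:ℝ), ρ ^ m • g a ρ) := by
    intro a
    have h1 : ∀ w : EuclideanSpace ℝ (Fin (m + 1)),
        S'.indicator (fun _ => (1:ℝ)) (a, w) = g a ‖w‖ := fun w => hind (a, w)
    rw [show (∫ w : EuclideanSpace ℝ (Fin (m + 1)), S'.indicator (fun _ => (1:ℝ)) (a, w))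
        = ∫ w : EuclideanSpace ℝ (Fin (m + 1)), g a ‖w‖ from by simp only [h1]]
    rw [integral_fun_norm_addHaar volume (g a)]
    simp only [finrank_euclideanSpace_fin, Nat.add_sub_cancel]
    rw [nsmul_eq_mul, smul_eq_mul, measureReal_def, ← hB]
    push_cast
    ring
  set SG : Set (ℝ × ℝ) := {p | 0 < p.2 ∧ t * Real.sqrt (p.1 ^ 2 + p.2 ^ 2) ≤ p.1 ∧
      Real.sqrt (p.1 ^ 2 + p.2 ^ 2) < 1} with hSG
  have hcont2 : Continuous (fun p : ℝ × ℝ => Real.sqrt (p.1 ^ 2 + p.2 ^ 2)) :=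
    ((continuous_fst.pow 2).add (continuous_snd.pow 2)).sqrt
  have hSGm : MeasurableSet SG := by
    rw [hSG, Set.setOf_and, Set.setOf_and]
    exact (measurableSet_lt measurable_const continuous_snd.measurable).inter
      ((measurableSet_le (continuous_const.mul hcont2).measurable
        continuous_fst.measurable).inter
        (measurableSet_lt hcont2.measurable measurable_const))
  set G : ℝ × ℝ → ℝ := SG.indicator (fun q => q.2 ^ m) with hG
  have hinner : ∀ a : ℝ, ∫ ρ in Ioi (0:ℝ), ρ ^ m • g a ρ = ∫ ρ : ℝ, G (a, ρ) := by
    intro a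
    rw [← integral_indicator measurableSet_Ioi]
    congr 1
    funext ρ
    rw [hG]
    by_cases hρ : ρ ∈ Ioi (0:ℝ)
    · rw [Set.indicator_of_mem hρ]
      by_cases hc : t * Real.sqrt (a ^ 2 + ρ ^ 2) ≤ a ∧ Real.sqrt (a ^ 2 + ρ ^ 2) < 1
      · have hmem1 : ρ ∈ {ρ' : ℝ | t * Real.sqrt (a ^ 2 + ρ' ^ 2) ≤ a ∧
            Real.sqrt (a ^ 2 + ρ' ^ 2) < 1} := hc
        rw [show g a ρ = 1 from by rw [hg]; exact Set.indicator_of_mem hmem1 _,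
          Set.indicator_of_mem (show (a, ρ) ∈ SG from ⟨hρ, hc.1, hc.2⟩)]
        simp
      · have hmem1 : ρ ∉ {ρ' : ℝ | t * Real.sqrt (a ^ 2 + ρ' ^ 2) ≤ a ∧
            Real.sqrt (a ^ 2 + ρ' ^ 2) < 1} := hc
        rw [show g a ρ = 0 from by rw [hg]; exact Set.indicator_of_notMem hmem1 _,
          Set.indicator_of_notMem (show (a, ρ) ∉ SG from fun h => hc ⟨h.2.1, h.2.2⟩)]
        simp
    · rw [Set.indicator_of_notMem hρ,
        Set.indicator_of_notMem (show (a, ρ) ∉ SG from fun h => hρ h.1)]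
  have habs2 : ∀ a ρ : ℝ, |a| ≤ Real.sqrt (a ^ 2 + ρ ^ 2) := by
    intro a ρ
    rw [← Real.sqrt_sq_eq_abs]
    exact Real.sqrt_le_sqrt (by nlinarith)
  have hGbound : SG ⊆ Ioo (-1:ℝ) 1 ×ˢ Ioo (-1:ℝ) 1 := by
    rintro ⟨a, ρ⟩ ⟨h1, h2, h3⟩
    have ha := (abs_lt.mp ((habs2 a ρ).trans_lt h3))
    have hρ' : |ρ| ≤ Real.sqrt (a ^ 2 + ρ ^ 2) := by
      rw [← Real.sqrt_sq_eq_abs]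
      exact Real.sqrt_le_sqrt (by nlinarith)
    have hρ2 := (abs_lt.mp (hρ'.trans_lt h3))
    exact ⟨⟨ha.1, ha.2⟩, ⟨hρ2.1, hρ2.2⟩⟩
  have hSGfin : volume SG ≠ ⊤ := by
    refine ((measure_mono hGbound).trans_lt ?_).ne
    rw [show (volume : Measure (ℝ × ℝ)) = (volume : Measure ℝ).prod volume from rfl,
      Measure.prod_prod]
    exact ENNReal.mul_lt_top (by simp [Real.volume_Ioo]) (by simp [Real.volume_Ioo])
  have hGint : Integrable G := by
    rw [hG, integrable_indicator_iff hSGm]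
    apply Measure.integrableOn_of_bounded hSGfin
      (continuous_snd.pow m).aestronglyMeasurable (M := 1)
    filter_upwards [ae_restrict_mem hSGm] with q hq
    have h2 : 0 < q.2 := hq.1
    have h2' : q.2 < 1 := by
      have h := (habs2 q.2 q.1).trans_lt (by rw [add_comm]; exact hq.2.2)
      exact (abs_lt.mp h).2
    rw [Real.norm_eq_abs, Pi.pow_apply, abs_pow, abs_of_pos h2]
    exact pow_le_one₀ h2.le h2'.le
  have step4 : ∫ a : ℝ, ∫ ρ : ℝ, G (a, ρ) = ∫ p : ℝ × ℝ, G p := by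
    have hGint' : Integrable (Function.uncurry fun a ρ => G (a, ρ))
        ((volume : Measure ℝ).prod (volume : Measure ℝ)) := by
      rw [← Measure.volume_eq_prod]
      exact hGint
    have h := integral_integral hGint'
    rw [Measure.volume_eq_prod]
    simpa using h
  have step5 : ∫ p : ℝ × ℝ, G p
      = ∫ q in polarCoord.target, q.1 • G (polarCoord.symm q) :=
    (integral_comp_polarCoord_symm G).symm
  set U : ℝ → ℝ := (Ioo (0:ℝ) 1).indicator (fun s => s ^ (m + 1)) with hU
  set W : ℝ → ℝ := (Ioc (0:ℝ) θ).indicator (fun φ => Real.sin φ ^ m) with hW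
  have hpt : Set.EqOn (fun q : ℝ × ℝ => q.1 • G (polarCoord.symm q))
      (fun q : ℝ × ℝ => U q.1 * W q.2) polarCoord.target := by
    rintro ⟨s, φ⟩ hq
    rw [polarCoord_target] at hq
    obtain ⟨hs, hφ⟩ := hq
    have hs0 : (0:ℝ) < s := hs
    have hsym : polarCoord.symm (s, φ) = (s * Real.cos φ, s * Real.sin φ) := rfl
    have hss : Real.sqrt ((s * Real.cos φ) ^ 2 + (s * Real.sin φ) ^ 2) = s := by
      rw [show (s * Real.cos φ) ^ 2 + (s * Real.sin φ) ^ 2 = s ^ 2 from by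
        nlinarith [Real.sin_sq_add_cos_sq φ], Real.sqrt_sq hs0.le]
    have hmem : ((s * Real.cos φ, s * Real.sin φ) ∈ SG)
        ↔ (s ∈ Ioo (0:ℝ) 1 ∧ φ ∈ Ioc (0:ℝ) θ) := by
      rw [hSG]
      simp only [Set.mem_setOf_eq, hss, Set.mem_Ioo, Set.mem_Ioc]
      constructor
      · rintro ⟨h1, h2, h3⟩
        have hsin : 0 < Real.sin φ := by nlinarith
        have hφ0 : 0 < φ := by
          by_contra hcon
          push_neg at hcon
          have := Real.sin_nonpos_of_nonpos_of_neg_pi_le hcon hφ.1.le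
          linarith
        have hcos : t ≤ Real.cos φ := by nlinarith
        have hφθ : φ ≤ θ := by
          by_contra hcon
          push_neg at hcon
          have hlt := Real.strictAntiOn_cos ⟨hθ0, Real.arccos_le_pi t⟩
            ⟨hφ0.le, hφ.2.le⟩ hcon
          rw [hθdef, Real.cos_arccos (by linarith) ht1.le] at hlt
          linarith
        exact ⟨⟨hs0, h3⟩, ⟨hφ0, hφθ⟩⟩
      · rintro ⟨⟨_, hs1⟩, ⟨hφ0, hφθ⟩⟩
        have hφπ2 : φ < π / 2 := lt_of_le_of_lt hφθ hθlt
        have hsin : 0 < Real.sin φ := Real.sin_pos_of_pos_of_lt_pi hφ0 (by linarith)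
        have hcos : t ≤ Real.cos φ := by
          have h := Real.cos_le_cos_of_nonneg_of_le_pi hφ0.le
            (by rw [hθdef]; exact Real.arccos_le_pi t) hφθ
          rwa [hθdef, Real.cos_arccos (by linarith) ht1.le] at h
        exact ⟨mul_pos hs0 hsin, by nlinarith, hs1⟩
    show s • G (polarCoord.symm (s, φ)) = U s * W φ
    rw [hsym]
    by_cases hc : s ∈ Ioo (0:ℝ) 1 ∧ φ ∈ Ioc (0:ℝ) θ
    · rw [hG, Set.indicator_of_mem (hmem.mpr hc), hU, hW,
        Set.indicator_of_mem hc.1, Set.indicator_of_mem hc.2]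
      simp only [smul_eq_mul]
      ring
    · rw [hG, Set.indicator_of_notMem (fun h => hc (hmem.mp h)), smul_zero, hU, hW]
      rcases not_and_or.mp hc with h | h
      · rw [Set.indicator_of_notMem h, zero_mul]
      · rw [Set.indicator_of_notMem h, mul_zero]
  have step6 : ∫ q in polarCoord.target, q.1 • G (polarCoord.symm q)
      = ∫ q in polarCoord.target, U q.1 * W q.2 :=
    setIntegral_congr_fun polarCoord.open_target.measurableSet hpt
  have step7 : ∫ q in polarCoord.target, U q.1 * W q.2
      = (∫ s in Ioi (0:ℝ), U s) * (∫ φ in Ioo (-π) π, W φ) := by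
    rw [polarCoord_target,
      show (volume : Measure (ℝ × ℝ)).restrict (Ioi (0:ℝ) ×ˢ Ioo (-π) π)
        = ((volume : Measure ℝ).restrict (Ioi 0)).prod
          ((volume : Measure ℝ).restrict (Ioo (-π) π)) from by
        rw [Measure.prod_restrict, ← Measure.volume_eq_prod]]
    exact integral_prod_mul U W
  have hUval : ∫ s in Ioi (0:ℝ), U s = 1 / ((m : ℝ) + 2) := by
    rw [hU, setIntegral_indicator measurableSet_Ioo,
      show Ioi (0:ℝ) ∩ Ioo 0 1 = Ioo 0 1 from
        Set.inter_eq_self_of_subset_right (fun x hx => hx.1),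
      ← integral_Ioc_eq_integral_Ioo, ← intervalIntegral.integral_of_le zero_le_one,
      integral_pow]
    push_cast
    rw [one_pow, zero_pow (by omega : m + 1 + 1 ≠ 0)]
    ring
  have hWval : ∫ φ in Ioo (-π) π, W φ = I := by
    rw [hW, setIntegral_indicator measurableSet_Ioc,
      show Ioo (-π) π ∩ Ioc 0 θ = Ioc 0 θ from
        Set.inter_eq_self_of_subset_right (fun φ hφ =>
          ⟨by linarith [hφ.1], by linarith [hφ.2]⟩),
      hI, intervalIntegral.integral_of_le hθ0]
  have key : (volume S').toReal = ((m : ℝ) + 1) * B / ((m : ℝ) + 2) * I := by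
    rw [step1, step2]
    rw [show (∫ a : ℝ, ∫ w : EuclideanSpace ℝ (Fin (m + 1)),
        S'.indicator (fun _ => (1:ℝ)) (a, w))
        = ∫ a : ℝ, ((m : ℝ) + 1) * (B * ∫ ρ : ℝ, G (a, ρ)) from by
      simp only [hGa, hinner]]
    rw [integral_const_mul, integral_const_mul, step4, step5, step6, step7, hUval, hWval]
    ring
  calc volume Scap = volume S' := hveq
    _ = ENNReal.ofReal ((volume S').toReal) := (ENNReal.ofReal_toReal hfin').symm
    _ = _ := by rw [key]


end VolumeCap


lemma const_eq (m : ℕ) :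
    (volume (ball (0 : EuclideanSpace ℝ (Fin (m + 2))) 1)).toReal⁻¹ *
      (((m : ℝ) + 1) *
        (volume (ball (0 : EuclideanSpace ℝ (Fin (m + 1))) 1)).toReal / ((m : ℝ) + 2))
    = Real.Gamma (((m : ℝ) + 2) / 2) /
        (Real.sqrt π * Real.Gamma (((m : ℝ) + 1) / 2)) := by
  rw [EuclideanSpace.volume_ball, EuclideanSpace.volume_ball]
  simp only [Fintype.card_fin, ENNReal.ofReal_one, one_pow, one_mul]
  have hπ : (0:ℝ) < Real.sqrt π := Real.sqrt_pos.mpr Real.pi_pos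
  have hg1 : (0:ℝ) < Real.Gamma (((m:ℝ) + 1) / 2) := Real.Gamma_pos_of_pos (by positivity)
  have hg2 : (0:ℝ) < Real.Gamma (((m:ℝ) + 2) / 2) := Real.Gamma_pos_of_pos (by positivity)
  have e1 : ((m + 1 : ℕ) : ℝ) / 2 + 1 = ((m:ℝ) + 1) / 2 + 1 := by push_cast; ring
  have e2 : ((m + 2 : ℕ) : ℝ) / 2 + 1 = ((m:ℝ) + 2) / 2 + 1 := by push_cast; ring
  rw [ENNReal.toReal_ofReal (by positivity), ENNReal.toReal_ofReal (by positivity), e1, e2,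
    Real.Gamma_add_one (by positivity), Real.Gamma_add_one (by positivity)]
  have hsp : Real.sqrt π ^ (m + 2) = Real.sqrt π ^ (m + 1) * Real.sqrt π := by ring
  rw [hsp]
  have h1 : (0:ℝ) < Real.sqrt π ^ (m + 1) := by positivity
  field_simp


lemma card_inter_lt {N d : ℕ} {c c' : Fin N → ZMod 2} (hc : hammingNorm c = d)
    (hc' : hammingNorm c' = d) (hne : c ≠ c') (hd : 0 < d) :
    (Finset.univ.filter fun i => c i ≠ 0 ∧ c' i ≠ 0).card < d := by
  classical
  by_contra h
  push_neg at h
  have hsub : (Finset.univ.filter fun i => c i ≠ 0 ∧ c' i ≠ 0)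
      ⊆ Finset.univ.filter fun i => c i ≠ 0 :=
    Finset.monotone_filter_right _ (fun i _ hi => hi.1)
  have hsub2 : (Finset.univ.filter fun i => c i ≠ 0 ∧ c' i ≠ 0)
      ⊆ Finset.univ.filter fun i => c' i ≠ 0 :=
    Finset.monotone_filter_right _ (fun i _ hi => hi.2)
  have heq1 := Finset.eq_of_subset_of_card_le hsub
    (by rw [← hammingNorm_eq_card, hc]; exact h)
  have heq2 := Finset.eq_of_subset_of_card_le hsub2
    (by rw [← hammingNorm_eq_card, hc']; exact h)
  apply hne
  funext i
  rcases zmod2_cases (c i) with h1 | h1 <;> rcases zmod2_cases (c' i) with h2 | h2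
  · rw [h1, h2]
  · exfalso
    have hi : i ∈ Finset.univ.filter fun i => c' i ≠ 0 := by
      simp [h2]
    rw [← heq2] at hi
    have := (Finset.mem_filter.mp hi).2.1
    exact this h1
  · exfalso
    have hi : i ∈ Finset.univ.filter fun i => c i ≠ 0 := by
      simp [h1]
    rw [← heq1] at hi
    have := (Finset.mem_filter.mp hi).2.2
    exact this h2
  · rw [h1, h2]

end Stmt17

open Stmt17 in
set_option maxHeartbeats 1000000 in
theorem stmt_17 (n : ℕ) (hn : 2 ≤ n)
    (C : Submodule (ZMod 2) (Fin n → ZMod 2)) (hC : ∃ c ∈ C, c ≠ 0)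
    (dmin : ℕ)
    (hdmin_le : ∀ c ∈ C, c ≠ 0 → dmin ≤ hammingNorm c)
    (hdmin_ex : ∃ c ∈ C, c ≠ 0 ∧ hammingNorm c = dmin)
    (A : ℕ) (hA : A = Set.ncard {c : Fin n → ZMod 2 | c ∈ C ∧ hammingNorm c = dmin})
    (μ : ℝ → Measure (EuclideanSpace ℝ (Fin n)))
    (hprob : ∀ r : ℝ, 0 < r → IsProbabilityMeasure (μ r))
    (hsupp : ∀ r : ℝ, 0 < r → μ r (Metric.sphere (bpsk (0 : Fin n → ZMod 2)) r) = 1)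
    (hinv : ∀ r : ℝ, 0 < r →
      ∀ O : EuclideanSpace ℝ (Fin n) ≃ₗᵢ[ℝ] EuclideanSpace ℝ (Fin n),
        (μ r).map (fun y => bpsk (0 : Fin n → ZMod 2) + O (y - bpsk (0 : Fin n → ZMod 2)))
          = μ r) :
    ∃ δ₁ : ℝ, Real.sqrt dmin < δ₁ ∧
      ∀ r : ℝ, Real.sqrt dmin < r → r ≤ δ₁ →
        (μ r {y | ∃ c ∈ C, c ≠ 0 ∧ ‖y - bpsk c‖ ≤ ‖y - bpsk (0 : Fin n → ZMod 2)‖}).toReal =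
          (A : ℝ) *
            ((Real.Gamma ((n : ℝ) / 2) / (Real.sqrt π * Real.Gamma (((n : ℝ) - 1) / 2))) *
              ∫ φ in (0:ℝ)..(Real.arccos (Real.sqrt dmin / r)), (Real.sin φ) ^ (n - 2)) := by
  classical
  obtain ⟨m, rfl⟩ : ∃ m, n = m + 2 := ⟨n - 2, by omega⟩
  have hd1 : 0 < dmin := by
    obtain ⟨c₀, _, hc₀0, hc₀w⟩ := hdmin_ex
    rw [← hc₀w]
    exact Nat.pos_of_ne_zero fun h => hc₀0 (hammingNorm_eq_zero.mp h)
  have hd1R : (1:ℝ) ≤ (dmin:ℝ) := by exact_mod_cast hd1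
  have hD0 : 0 < Real.sqrt (dmin:ℝ) := Real.sqrt_pos.mpr (by linarith)
  have hDsq : Real.sqrt (dmin:ℝ) ^ 2 = (dmin : ℝ) := Real.sq_sqrt (by positivity)
  refine ⟨Real.sqrt ((dmin : ℝ) + 2⁻¹), Real.sqrt_lt_sqrt (by positivity) (by norm_num), ?_⟩
  intro r hrD hrδ
  have hr0 : 0 < r := hD0.trans hrD
  haveI := hprob r hr0
  have hr2 : r ^ 2 ≤ (dmin : ℝ) + 2⁻¹ := (Real.le_sqrt hr0.le (by positivity)).mp hrδ
  have ht : 0 < Real.sqrt (dmin:ℝ) / r := div_pos hD0 hr0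
  have ht1 : Real.sqrt (dmin:ℝ) / r < 1 := (div_lt_one hr0).mpr hrD
  have hSm : MeasurableSet (Metric.sphere (bpsk (0 : Fin (m+2) → ZMod 2)) r) :=
    isClosed_sphere.measurableSet
  have hSnull : μ r (Metric.sphere (bpsk (0 : Fin (m+2) → ZMod 2)) r)ᶜ = 0 := by
    rw [measure_compl hSm (measure_ne_top _ _), hsupp r hr0, measure_univ, tsub_self]
  have hrestr : ∀ X : Set (EuclideanSpace ℝ (Fin (m+2))),
      μ r X = μ r (X ∩ Metric.sphere (bpsk (0 : Fin (m+2) → ZMod 2)) r) := by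
    intro X
    have hd0 : μ r (X \ Metric.sphere (bpsk (0 : Fin (m+2) → ZMod 2)) r) = 0 :=
      measure_mono_null (fun y hy => hy.2) hSnull
    rw [← measure_inter_add_diff X hSm, hd0, add_zero]
  set Mfin : Finset (Fin (m + 2) → ZMod 2) :=
    (Set.toFinite {c : Fin (m + 2) → ZMod 2 | c ∈ C ∧ hammingNorm c = dmin}).toFinset
    with hMfin
  have hMmem : ∀ c, c ∈ Mfin ↔ c ∈ C ∧ hammingNorm c = dmin := fun c => by
    rw [hMfin, Set.Finite.mem_toFinset, Set.mem_setOf_eq]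
  have hAcard : Mfin.card = A := by
    rw [hA]
    exact (Set.ncard_eq_toFinset_card _ (Set.toFinite _)).symm
  have hc0 : ∀ c ∈ Mfin, c ≠ 0 := by
    intro c hc h0
    have h2 := ((hMmem c).mp hc).2
    rw [h0] at h2
    have h3 : hammingNorm (0 : Fin (m+2) → ZMod 2) = 0 := hammingNorm_eq_zero.mpr rfl
    omega
  have hvnorm : ∀ c ∈ Mfin, ‖bpsk c - bpsk (0 : Fin (m+2) → ZMod 2)‖
      = 2 * Real.sqrt (dmin:ℝ) := by
    intro c hc
    rw [norm_bpsk_sub, ((hMmem c).mp hc).2]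
  set u : (Fin (m + 2) → ZMod 2) → EuclideanSpace ℝ (Fin (m + 2)) := fun c =>
    ‖bpsk c - bpsk (0 : Fin (m+2) → ZMod 2)‖⁻¹ •
      (bpsk c - bpsk (0 : Fin (m+2) → ZMod 2)) with hudef
  have hunorm : ∀ c ∈ Mfin, ‖u c‖ = 1 := by
    intro c hc
    rw [hudef]
    simp only
    rw [norm_smul, hvnorm c hc, Real.norm_eq_abs, abs_of_pos (by positivity),
      inv_mul_cancel₀ (by positivity)]
  have hinner_u : ∀ c ∈ Mfin, ∀ y : EuclideanSpace ℝ (Fin (m+2)),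
      ⟪y - bpsk (0 : Fin (m+2) → ZMod 2), u c⟫
      = (2 * Real.sqrt (dmin:ℝ))⁻¹ *
        ⟪y - bpsk (0 : Fin (m+2) → ZMod 2), bpsk c - bpsk (0 : Fin (m+2) → ZMod 2)⟫ := by
    intro c hc y
    rw [hudef]
    simp only
    rw [real_inner_smul_right, hvnorm c hc]
  have hcap_iff : ∀ c ∈ Mfin, ∀ y : EuclideanSpace ℝ (Fin (m + 2)),
      (‖y - bpsk c‖ ≤ ‖y - bpsk (0 : Fin (m+2) → ZMod 2)‖
        ↔ Real.sqrt (dmin:ℝ) ≤ ⟪y - bpsk (0 : Fin (m+2) → ZMod 2), u c⟫) := by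
    intro c hc y
    rw [norm_le_iff_halfspace, hinner_u c hc y, ((hMmem c).mp hc).2,
      inv_mul_eq_div, le_div_iff₀ (by positivity)]
    constructor <;> intro h <;> nlinarith [hDsq]
  have hcapm : ∀ c, MeasurableSet {y : EuclideanSpace ℝ (Fin (m+2)) |
      Real.sqrt (dmin:ℝ) ≤ ⟪y - bpsk (0 : Fin (m+2) → ZMod 2), u c⟫} := fun c =>
    measurableSet_cap _ _ _
  have hdecomp : {y : EuclideanSpace ℝ (Fin (m+2)) | ∃ c ∈ C, c ≠ 0 ∧
        ‖y - bpsk c‖ ≤ ‖y - bpsk (0 : Fin (m+2) → ZMod 2)‖}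
        ∩ Metric.sphere (bpsk (0 : Fin (m+2) → ZMod 2)) r
      = ⋃ c ∈ Mfin, ({y : EuclideanSpace ℝ (Fin (m+2)) |
          Real.sqrt (dmin:ℝ) ≤ ⟪y - bpsk (0 : Fin (m+2) → ZMod 2), u c⟫}
        ∩ Metric.sphere (bpsk (0 : Fin (m+2) → ZMod 2)) r) := by
    ext y
    simp only [Set.mem_inter_iff, Set.mem_setOf_eq, Set.mem_iUnion, exists_prop]
    constructor
    · rintro ⟨⟨c, hcC, hc0', hle⟩, hyS⟩
      have h2wt := (norm_le_iff_halfspace c y).mp hle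
      have hCS := real_inner_le_norm (y - bpsk (0 : Fin (m+2) → ZMod 2))
        (bpsk c - bpsk (0 : Fin (m+2) → ZMod 2))
      rw [norm_bpsk_sub] at hCS
      rw [mem_sphere_iff_norm] at hyS
      rw [hyS] at hCS
      have hwpos : 0 < hammingNorm c :=
        Nat.pos_of_ne_zero fun h => hc0' (hammingNorm_eq_zero.mp h)
      have hwR : (0:ℝ) < (hammingNorm c : ℝ) := by exact_mod_cast hwpos
      have hsq : Real.sqrt (hammingNorm c : ℝ) * Real.sqrt (hammingNorm c : ℝ)
          = (hammingNorm c : ℝ) := Real.mul_self_sqrt (by positivity)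
      have hsqrt_pos : 0 < Real.sqrt (hammingNorm c : ℝ) := Real.sqrt_pos.mpr hwR
      have h1 : Real.sqrt (hammingNorm c : ℝ) ≤ r := by nlinarith
      have h2 : (hammingNorm c : ℝ) ≤ (dmin:ℝ) + 2⁻¹ := by nlinarith
      have h3 : hammingNorm c < dmin + 1 := by
        have h2' : (hammingNorm c : ℝ) < (dmin:ℝ) + 1 := by linarith
        exact_mod_cast h2'
      have h4 : hammingNorm c = dmin :=
        le_antisymm (Nat.lt_succ_iff.mp h3) (hdmin_le c hcC hc0')
      have hcM : c ∈ Mfin := (hMmem c).mpr ⟨hcC, h4⟩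
      exact ⟨c, hcM, (hcap_iff c hcM y).mp hle, by rwa [mem_sphere_iff_norm]⟩
    · rintro ⟨c, hcM, hcap, hyS⟩
      exact ⟨⟨c, ((hMmem c).mp hcM).1, hc0 c hcM, (hcap_iff c hcM y).mpr hcap⟩, hyS⟩
  have hdisj : (↑Mfin : Set (Fin (m+2) → ZMod 2)).PairwiseDisjoint
      (fun c => {y : EuclideanSpace ℝ (Fin (m+2)) |
          Real.sqrt (dmin:ℝ) ≤ ⟪y - bpsk (0 : Fin (m+2) → ZMod 2), u c⟫}
        ∩ Metric.sphere (bpsk (0 : Fin (m+2) → ZMod 2)) r) := by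
    intro c hcM c' hcM' hne
    rw [Function.onFun, Set.disjoint_left]
    rintro y ⟨hy1, hyS⟩ ⟨hy2, _⟩
    rw [Finset.mem_coe] at hcM hcM'
    rw [Set.mem_setOf_eq] at hy1 hy2
    rw [mem_sphere_iff_norm] at hyS
    have hω : ‖r⁻¹ • (y - bpsk (0 : Fin (m+2) → ZMod 2))‖ = 1 := by
      rw [norm_smul, hyS, Real.norm_eq_abs, abs_of_pos (inv_pos.mpr hr0),
        inv_mul_cancel₀ hr0.ne']
    have hmk : ∀ z : EuclideanSpace ℝ (Fin (m+2)),
        Real.sqrt (dmin:ℝ) ≤ ⟪y - bpsk (0 : Fin (m+2) → ZMod 2), z⟫ →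
        Real.sqrt (dmin:ℝ) / r ≤ ⟪r⁻¹ • (y - bpsk (0 : Fin (m+2) → ZMod 2)), z⟫ := by
      intro z hz
      rw [real_inner_smul_left, div_eq_inv_mul]
      exact mul_le_mul_of_nonneg_left hz (inv_nonneg.mpr hr0.le)
    have hkey := inner_ge_of_caps hω (hunorm c hcM) (hunorm c' hcM') ht.le
      (hmk _ hy1) (hmk _ hy2)
    have hkd : (Finset.univ.filter fun i => c i ≠ 0 ∧ c' i ≠ 0).card < dmin :=
      card_inter_lt ((hMmem c).mp hcM).2 ((hMmem c').mp hcM').2 hne hd1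
    set k : ℕ := (Finset.univ.filter fun i => c i ≠ 0 ∧ c' i ≠ 0).card with hkdef
    have hkR : (k:ℝ) ≤ (dmin:ℝ) - 1 := by
      have hk1 : k + 1 ≤ dmin := hkd
      have : (k:ℝ) + 1 ≤ (dmin:ℝ) := by exact_mod_cast hk1
      linarith
    have hdpos : (0:ℝ) < (dmin:ℝ) := by linarith
    have huu : ⟪u c, u c'⟫ = (k:ℝ) / (dmin:ℝ) := by
      rw [hudef]
      simp only
      rw [real_inner_smul_left, real_inner_smul_right, inner_bpsk_sub,
        hvnorm c hcM, hvnorm c' hcM', ← hkdef]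
      have hDD : Real.sqrt (dmin:ℝ) * Real.sqrt (dmin:ℝ) = (dmin:ℝ) :=
        Real.mul_self_sqrt (by positivity)
      field_simp
      nlinarith [hDD]
    have e : (Real.sqrt (dmin:ℝ) / r)^2 = (dmin:ℝ)/r^2 := by rw [div_pow, hDsq]
    rw [huu, e] at hkey
    have hr2pos : (0:ℝ) < r^2 := by positivity
    have h5 : (2*((dmin:ℝ)/r^2) - 1) * (r^2 * dmin) ≤ ((k:ℝ)/dmin) * (r^2 * dmin) :=
      mul_le_mul_of_nonneg_right hkey (by positivity)
    have h6 : (2*((dmin:ℝ)/r^2) - 1) * (r^2 * dmin) = 2*(dmin:ℝ)^2 - r^2*dmin := by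
      field_simp
    have h7 : ((k:ℝ)/dmin) * (r^2 * dmin) = (k:ℝ)*r^2 := by
      field_simp
    have h8 : (k:ℝ)*r^2 ≤ ((dmin:ℝ) - 1)*r^2 := mul_le_mul_of_nonneg_right hkR hr2pos.le
    have h9 : r^2*(2*(dmin:ℝ) - 1) ≤ ((dmin:ℝ) + 2⁻¹)*(2*(dmin:ℝ)-1) :=
      mul_le_mul_of_nonneg_right hr2 (by linarith)
    nlinarith [h5, h6, h7, h8, h9]
  have capμ : ∀ c ∈ Mfin, μ r {y : EuclideanSpace ℝ (Fin (m+2)) |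
      Real.sqrt (dmin:ℝ) ≤ ⟪y - bpsk (0 : Fin (m+2) → ZMod 2), u c⟫}
      = (volume (ball (0 : EuclideanSpace ℝ (Fin (m + 2))) 1))⁻¹ *
        ENNReal.ofReal ((((m : ℝ) + 1) *
          (volume (ball (0 : EuclideanSpace ℝ (Fin (m + 1))) 1)).toReal / ((m : ℝ) + 2)) *
          ∫ φ in (0:ℝ)..(Real.arccos (Real.sqrt (dmin:ℝ) / r)), Real.sin φ ^ m) := by
    intro c hcM
    have h1 : μ r {y : EuclideanSpace ℝ (Fin (m+2)) |
        Real.sqrt (dmin:ℝ) ≤ ⟪y - bpsk (0 : Fin (m+2) → ZMod 2), u c⟫}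
        = sigmaMeasure (bpsk (0 : Fin (m+2) → ZMod 2)) r
          {y : EuclideanSpace ℝ (Fin (m+2)) |
            Real.sqrt (dmin:ℝ) ≤ ⟪y - bpsk (0 : Fin (m+2) → ZMod 2), u c⟫} :=
      cap_eq_of_inv (Nat.succ_pos _) _ hr0 (μ r) _ (hsupp r hr0)
        (sigma_sphere _ hr0) (hinv r hr0) (sigma_inv _ r) _ _ (hunorm c hcM)
    have h2 : sigmaMeasure (bpsk (0 : Fin (m+2) → ZMod 2)) r
        {y : EuclideanSpace ℝ (Fin (m+2)) |
          Real.sqrt (dmin:ℝ) ≤ ⟪y - bpsk (0 : Fin (m+2) → ZMod 2), u c⟫}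
        = sigmaMeasure (bpsk (0 : Fin (m+2) → ZMod 2)) r
          {y : EuclideanSpace ℝ (Fin (m+2)) | Real.sqrt (dmin:ℝ) ≤
            ⟪y - bpsk (0 : Fin (m+2) → ZMod 2), EuclideanSpace.single 0 (1:ℝ)⟫} :=
      cap_const (Nat.succ_pos _) _ _ (sigma_inv _ r) _ _ _ (hunorm c hcM)
        (by rw [EuclideanSpace.norm_single]; norm_num)
    rw [h1, h2, sigma_cap _ hr0 hD0 _, volume_cap m ht ht1]
  have hsum : μ r {y : EuclideanSpace ℝ (Fin (m+2)) | ∃ c ∈ C, c ≠ 0 ∧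
        ‖y - bpsk c‖ ≤ ‖y - bpsk (0 : Fin (m+2) → ZMod 2)‖}
      = Mfin.card • ((volume (ball (0 : EuclideanSpace ℝ (Fin (m + 2))) 1))⁻¹ *
        ENNReal.ofReal ((((m : ℝ) + 1) *
          (volume (ball (0 : EuclideanSpace ℝ (Fin (m + 1))) 1)).toReal / ((m : ℝ) + 2)) *
          ∫ φ in (0:ℝ)..(Real.arccos (Real.sqrt (dmin:ℝ) / r)), Real.sin φ ^ m)) := by
    rw [hrestr _, hdecomp, measure_biUnion_finset hdisj (fun c _ => (hcapm c).inter hSm)]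
    rw [Finset.sum_congr rfl (fun c hc => ((hrestr _).symm.trans (capμ c hc))),
      Finset.sum_const]
  have hI0 : 0 ≤ ∫ φ in (0:ℝ)..(Real.arccos (Real.sqrt (dmin:ℝ) / r)), Real.sin φ ^ m := by
    apply intervalIntegral.integral_nonneg (Real.arccos_nonneg _)
    intro x hx
    exact pow_nonneg (Real.sin_nonneg_of_nonneg_of_le_pi hx.1
      (le_trans hx.2 (Real.arccos_le_pi _))) m
  have hB1 : (0:ℝ) ≤ (((m : ℝ) + 1) *
      (volume (ball (0 : EuclideanSpace ℝ (Fin (m + 1))) 1)).toReal / ((m : ℝ) + 2)) := by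
    positivity
  rw [hsum, nsmul_eq_mul, ENNReal.toReal_mul, ENNReal.toReal_mul, ENNReal.toReal_inv,
    ENNReal.toReal_ofReal (mul_nonneg hB1 hI0), ENNReal.toReal_natCast, hAcard]
  simp only [Nat.add_sub_cancel]
  rw [← mul_assoc ((volume (ball (0 : EuclideanSpace ℝ (Fin (m + 2))) 1)).toReal⁻¹) _ _,
    const_eq m]
  push_cast
  ring_nf
end
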